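/- arXiv:1612.07391 — 4 statements merged into one kernel-verified Lean document; each statement's English description precedes it below -/
import Mathlib

section
/- For every integer n ≥ 1, the following identity holds in ℤ[x]: the sum over all Stirling permutations σ of order n of x^{ap(σ)} equals the sum over all permutations π ∈ S_n of x^{asc(π)} 2^{n − lrmin(π)}. -/
open Finset

section Defs

variable {m : ℕ} {α : Type*}

def lrminFilter [LinearOrder α] (f : Fin m → α) : Finset (Fin m) :=
  univ.filter fun i => ∀ j, j < i → f i < f j

def lrminCount [LinearOrder α] (f : Fin m → α) : ℕ :=
  (lrminFilter f).card

def lrminSet [LinearOrder α] [DecidableEq α] (f : Fin m → α) : Finset α :=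
  (lrminFilter f).image f

def ascFilter [LinearOrder α] (f : Fin m → α) : Finset (Fin m) :=
  univ.filter fun i => ∃ j : Fin m, (j : ℕ) + 1 = (i : ℕ) ∧ f j < f i

def ascCount [LinearOrder α] (f : Fin m → α) : ℕ :=
  (ascFilter f).card

def ascSet [LinearOrder α] [DecidableEq α] (f : Fin m → α) : Finset α :=
  (ascFilter f).image f

def apFilter [LinearOrder α] (f : Fin m → α) : Finset (Fin m) :=
  univ.filter fun i =>
    ∃ j k : Fin m, (j : ℕ) + 1 = (i : ℕ) ∧ (i : ℕ) + 1 = (k : ℕ) ∧ f j < f i ∧ f i = f k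

def apCount [LinearOrder α] (f : Fin m → α) : ℕ := (apFilter f).card

def apSet [LinearOrder α] [DecidableEq α] (f : Fin m → α) : Finset α := (apFilter f).image f

def evenFilter [DecidableEq α] (f : Fin m → α) : Finset (Fin m) :=
  univ.filter fun p => (p : ℕ) % 2 = 1 ∧ ∀ q, q < p → f q ≠ f p

def evenCount [DecidableEq α] (f : Fin m → α) : ℕ := (evenFilter f).card

def evenSet [DecidableEq α] (f : Fin m → α) : Finset α := (evenFilter f).image f

def desrlminCount [LinearOrder α] (f : Fin m → α) : ℕ :=
  (univ.filter fun i : Fin m =>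
    (∃ j : Fin m, (j : ℕ) + 1 = (i : ℕ) ∧ f i < f j) ∨ ∀ j, i < j → f i < f j).card

def isLRminPos [LinearOrder α] (f : Fin m → α) (i : Fin m) : Prop :=
  ∀ j, j < i → f i < f j

instance [LinearOrder α] (f : Fin m → α) : DecidablePred (isLRminPos f) := fun i => by
  unfold isLRminPos; infer_instance

def bk2Count [LinearOrder α] (f : Fin m → α) : ℕ :=
  (univ.filter fun i : Fin m =>
    isLRminPos f i ∧ (i : ℕ) + 1 < m ∧
      (∀ j : Fin m, (j : ℕ) = (i : ℕ) + 1 → ¬ isLRminPos f j) ∧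
      (∀ j : Fin m, (j : ℕ) = (i : ℕ) + 2 → isLRminPos f j)).card

end Defs

def IsStirling (n : ℕ) (f : Fin (2 * n) → Fin n) : Prop :=
  (∀ k : Fin n, (univ.filter fun p => f p = k).card = 2) ∧
    ∀ p q r : Fin (2 * n), p < q → q < r → f p = f r → f p < f q

instance (n : ℕ) : DecidablePred (IsStirling n) := fun f => by
  unfold IsStirling; infer_instance

def stirlingFinset (n : ℕ) : Finset (Fin (2 * n) → Fin n) :=
  univ.filter (IsStirling n)

def markedPerms (n : ℕ) : Finset (Equiv.Perm (Fin n) × Finset (Fin n)) :=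
  univ.filter fun pm => ∀ v ∈ pm.2, v ∉ lrminSet (⇑pm.1)


open Finset
section InsW
variable {α : Type*} [LinearOrder α] {m : ℕ}

def ιW (k : ℕ) (g : Fin (m+1)) (i : Fin m) : Fin (m+k) :=
  ⟨if (i:ℕ) < (g:ℕ) then (i:ℕ) else (i:ℕ)+k, by have := i.isLt; split <;> omega⟩

def insW (k : ℕ) (f : Fin m → α) (N : α) (g : Fin (m+1)) (p : Fin (m+k)) : α :=
  if h : (p:ℕ) < (g:ℕ) then f ⟨p, by have := g.isLt; omega⟩
  else if h2 : (p:ℕ) < (g:ℕ)+k then N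
  else f ⟨(p:ℕ)-k, by have := p.isLt; omega⟩

lemma insW_lo (k : ℕ) (f : Fin m → α) (N : α) (g : Fin (m+1)) (p : Fin (m+k))
    (hp : (p:ℕ) < (g:ℕ)) :
    insW k f N g p = f ⟨p, by have := g.isLt; omega⟩ := by
  unfold insW; rw [dif_pos hp]

lemma insW_mid (k : ℕ) (f : Fin m → α) (N : α) (g : Fin (m+1)) (p : Fin (m+k))
    (hp1 : (g:ℕ) ≤ (p:ℕ)) (hp2 : (p:ℕ) < (g:ℕ)+k) :
    insW k f N g p = N := by
  unfold insW; rw [dif_neg (by omega), dif_pos hp2]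

lemma insW_hi (k : ℕ) (f : Fin m → α) (N : α) (g : Fin (m+1)) (p : Fin (m+k))
    (hp : (g:ℕ)+k ≤ (p:ℕ)) :
    insW k f N g p = f ⟨(p:ℕ)-k, by have := p.isLt; omega⟩ := by
  unfold insW; rw [dif_neg (by omega), dif_neg (by omega)]

lemma insW_apply_ιW (k : ℕ) (f : Fin m → α) (N : α) (g : Fin (m+1)) (i : Fin m) :
    insW k f N g (ιW k g i) = f i := by
  by_cases h : (i:ℕ) < (g:ℕ)
  · rw [show ιW k g i = ⟨(i:ℕ), by have := i.isLt; omega⟩ by unfold ιW; exact Fin.ext (by simp [h])]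
    rw [insW_lo (hp := by simpa using h)]
  · rw [show ιW k g i = ⟨(i:ℕ)+k, by have := i.isLt; omega⟩ by unfold ιW; exact Fin.ext (by simp [h])]
    rw [insW_hi (hp := by simp; omega)]
    congr 1; exact Fin.ext (by simp)

lemma ιW_val (k : ℕ) (g : Fin (m+1)) (i : Fin m) :
    (ιW k g i : ℕ) = if (i:ℕ) < (g:ℕ) then (i:ℕ) else (i:ℕ)+k := rfl

def gapEquiv (m k : ℕ) (g : Fin (m+1)) : (Fin k ⊕ Fin m) ≃ Fin (m+k) where
  toFun := Sum.elim (fun j => ⟨(g:ℕ)+(j:ℕ), by have := j.isLt; have := g.isLt; omega⟩) (ιW k g)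
  invFun p :=
    if h1 : (p:ℕ) < (g:ℕ) then .inr ⟨p, by have := g.isLt; omega⟩
    else if h2 : (p:ℕ) < (g:ℕ)+k then .inl ⟨(p:ℕ)-(g:ℕ), by omega⟩
    else .inr ⟨(p:ℕ)-k, by have := p.isLt; omega⟩
  left_inv := by
    rintro (j | i)
    · have hj := j.isLt
      have hg := g.isLt
      dsimp only [Sum.elim_inl]
      split
      · next h => exact absurd h (by simp)
      · split
        · next h => simp only [Sum.inl.injEq]; exact Fin.ext (by simp)
        · next h h2 => exact absurd h2 (by simp)
    · have hi := i.isLt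
      have hg := g.isLt
      dsimp only [Sum.elim_inr]
      by_cases h : (i:ℕ) < (g:ℕ)
      · have hv : (ιW k g i : ℕ) = (i:ℕ) := by rw [ιW_val, if_pos h]
        split
        · next hc => simp only [Sum.inr.injEq]; exact Fin.ext (by simpa using hv)
        · next hc => exact absurd hc (by simp [hv, h])
      · have hv : (ιW k g i : ℕ) = (i:ℕ)+k := by rw [ιW_val, if_neg h]
        split
        · next hc => exact absurd hc (by simp [hv]; omega)
        · split
          · next hc hc2 => exact absurd hc2 (by simp [hv]; omega)
          · next hc hc2 => simp only [Sum.inr.injEq]; exact Fin.ext (by simp [hv])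
  right_inv := by
    intro p
    have hp := p.isLt
    dsimp only
    split
    · next h =>
      dsimp only [Sum.elim_inr]
      exact Fin.ext (by rw [ιW_val]; simp [h])
    · split
      · next h h2 =>
        dsimp only [Sum.elim_inl]
        exact Fin.ext (by simp; omega)
      · next h h2 =>
        dsimp only [Sum.elim_inr]
        exact Fin.ext (by rw [ιW_val, if_neg (by simp; omega)]; simp; omega)

lemma sum_gap_split {M : Type*} [AddCommMonoid M] (k : ℕ) (g : Fin (m+1)) (h : Fin (m+k) → M) :
    ∑ p, h p = (∑ j : Fin k, h ⟨(g:ℕ)+(j:ℕ), by have := j.isLt; have := g.isLt; omega⟩)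
      + ∑ i : Fin m, h (ιW k g i) := by
  rw [← Equiv.sum_comp (gapEquiv m k g) h, Fintype.sum_sum_type]
  rfl

end InsW

lemma insW_cases {α : Type*} [LinearOrder α] {m : ℕ} (k : ℕ) (f : Fin m → α) (N : α)
    (g : Fin (m+1)) (p : Fin (m+k)) :
    ((g:ℕ) ≤ (p:ℕ) ∧ (p:ℕ) < (g:ℕ)+k ∧ insW k f N g p = N) ∨ ∃ i : Fin m, p = ιW k g i := by
  obtain ⟨x, hx⟩ := (gapEquiv m k g).surjective p
  rcases x with j | i
  · left
    have hj := j.isLt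
    have hv : (p:ℕ) = (g:ℕ)+(j:ℕ) := by rw [← hx]; rfl
    exact ⟨by omega, by omega, insW_mid _ _ _ _ _ (by omega) (by omega)⟩
  · right; exact ⟨i, hx.symm⟩
section Stats
variable {α : Type*} [LinearOrder α] {m : ℕ}

lemma mem_ascFilter {w : Fin m → α} {p : Fin m} :
    p ∈ ascFilter w ↔ ∃ j : Fin m, (j:ℕ)+1 = (p:ℕ) ∧ w j < w p := by
  simp [ascFilter]

lemma mem_apFilter {w : Fin m → α} {p : Fin m} :
    p ∈ apFilter w ↔ ∃ j k : Fin m, (j:ℕ)+1 = (p:ℕ) ∧ (p:ℕ)+1 = (k:ℕ) ∧ w j < w p ∧ w p = w k := by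
  simp [apFilter]

lemma mem_lrminFilter {w : Fin m → α} {p : Fin m} :
    p ∈ lrminFilter w ↔ ∀ j, j < p → w p < w j := by
  simp [lrminFilter]

variable {β : Type*} [LinearOrder β]

lemma ascFilter_comp {e : α → β} (he : StrictMono e) (f : Fin m → α) :
    ascFilter (fun i => e (f i)) = ascFilter f := by
  ext i; simp [ascFilter, he.lt_iff_lt]

lemma lrminFilter_comp {e : α → β} (he : StrictMono e) (f : Fin m → α) :
    lrminFilter (fun i => e (f i)) = lrminFilter f := by
  ext i; simp [lrminFilter, he.lt_iff_lt]

lemma apFilter_comp {e : α → β} (he : StrictMono e) (f : Fin m → α) :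
    apFilter (fun i => e (f i)) = apFilter f := by
  ext i; simp [apFilter, he.lt_iff_lt, he.injective.eq_iff]

lemma card_eq_sum_ind {γ : Type*} [Fintype γ] [DecidableEq γ] (s : Finset γ) :
    s.card = ∑ a : γ, if a ∈ s then 1 else 0 := by
  rw [Finset.sum_ite_mem, Finset.univ_inter, Finset.card_eq_sum_ones]

lemma ιW_lt_ιW {k : ℕ} {g : Fin (m+1)} {i j : Fin m} :
    ιW k g i < ιW k g j ↔ i < j := by
  rw [Fin.lt_def, Fin.lt_def, ιW_val, ιW_val]
  split_ifs <;> omega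

end Stats

section AscLrmin
variable {α : Type*} [LinearOrder α] {m : ℕ} (f : Fin m → α) (N : α) (g : Fin (m+1))
  (hN : ∀ i, f i < N)
include hN

lemma asc_pivot : (g ∈ ascFilter (insW 1 f N g)) ↔ (g:ℕ) ≠ 0 := by
  have hgm := g.isLt
  rw [mem_ascFilter]
  constructor
  · rintro ⟨j, hj, -⟩; omega
  · intro hg
    refine ⟨⟨(g:ℕ)-1, by omega⟩, by simp; omega, ?_⟩
    rw [insW_lo 1 f N g ⟨(g:ℕ)-1, by omega⟩ (by show (g:ℕ)-1 < g; omega), insW_mid _ _ _ _ _ (le_refl _) (by omega)]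
    exact hN _

lemma asc_iota (i : Fin m) :
    (ιW 1 g i ∈ ascFilter (insW 1 f N g)) ↔ ((i:ℕ) ≠ (g:ℕ) ∧ i ∈ ascFilter f) := by
  have hiv := ιW_val 1 g i
  have him := i.isLt
  have hgm := g.isLt
  rw [mem_ascFilter, mem_ascFilter]
  constructor
  · rintro ⟨j, hj1, hj2⟩
    rw [insW_apply_ιW] at hj2
    rw [hiv] at hj1
    by_cases hig : (i:ℕ) = (g:ℕ)
    · exfalso
      have hj_val : (j:ℕ) = (g:ℕ) := by simp [hig] at hj1; omega
      rw [insW_mid _ _ _ _ _ (by omega) (by omega)] at hj2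
      exact absurd hj2 (not_lt.mpr (le_of_lt (hN i)))
    · refine ⟨hig, ?_⟩
      by_cases hlt : (i:ℕ) < (g:ℕ)
      · rw [if_pos hlt] at hj1
        rw [insW_lo _ _ _ _ _ (by omega)] at hj2
        exact ⟨⟨(j:ℕ), by omega⟩, by simp; omega, hj2⟩
      · rw [if_neg hlt] at hj1
        rw [insW_hi _ _ _ _ _ (by omega)] at hj2
        exact ⟨⟨(j:ℕ)-1, by omega⟩, by simp; omega, hj2⟩
  · rintro ⟨hig, j', hj'1, hj'2⟩
    by_cases hlt : (i:ℕ) < (g:ℕ)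
    · refine ⟨⟨(j':ℕ), by omega⟩, by simp [hiv, if_pos hlt]; omega, ?_⟩
      rw [insW_apply_ιW, insW_lo _ _ _ _ _ (by simp; omega)]
      exact hj'2
    · refine ⟨⟨(i:ℕ), by omega⟩, by simp [hiv, if_neg hlt], ?_⟩
      rw [insW_apply_ιW, insW_hi _ _ _ _ _ (by simp; omega)]
      have : (⟨((⟨(i:ℕ), by omega⟩ : Fin (m+1)):ℕ)-1, by omega⟩ : Fin m) = j' :=
        Fin.ext (by simp; omega)
      rw [this]; exact hj'2

lemma lrmin_pivot : (g ∈ lrminFilter (insW 1 f N g)) ↔ (g:ℕ) = 0 := by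
  have hgm := g.isLt
  rw [mem_lrminFilter]
  constructor
  · intro h
    by_contra hg
    have h0 : (⟨0, by omega⟩ : Fin (m+1)) < g := by rw [Fin.lt_def]; show 0 < (g:ℕ); omega
    have := h _ h0
    rw [insW_mid _ _ _ _ _ (le_refl _) (by omega), insW_lo 1 f N g ⟨0, by omega⟩ (by show 0 < (g:ℕ); omega)] at this
    exact absurd this (not_lt.mpr (le_of_lt (hN _)))
  · intro hg j hj
    exfalso
    rw [Fin.lt_def] at hj
    omega

lemma lrmin_iota (i : Fin m) :
    (ιW 1 g i ∈ lrminFilter (insW 1 f N g)) ↔ i ∈ lrminFilter f := by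
  have him := i.isLt
  have hgm := g.isLt
  rw [mem_lrminFilter, mem_lrminFilter]
  constructor
  · intro h j hj
    have := h (ιW 1 g j) (ιW_lt_ιW.mpr hj)
    rwa [insW_apply_ιW, insW_apply_ιW] at this
  · intro h q hq
    rw [insW_apply_ιW]
    rcases insW_cases 1 f N g q with ⟨h1, h2, h3⟩ | ⟨j, rfl⟩
    · rw [h3]; exact hN i
    · rw [insW_apply_ιW]
      exact h j (ιW_lt_ιW.mp hq)
end AscLrmin
section Ap
variable {α : Type*} [LinearOrder α] {m : ℕ} (f : Fin m → α) (N : α) (g : Fin (m+1))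
  (hN : ∀ i, f i < N)
include hN

lemma ap_pivot0 :
    ((⟨(g:ℕ), by have := g.isLt; omega⟩ : Fin (m+2)) ∈ apFilter (insW 2 f N g)) ↔ (g:ℕ) ≠ 0 := by
  have hgm := g.isLt
  rw [mem_apFilter]
  constructor
  · rintro ⟨j, k, hj, -, -, -⟩; simp at hj; omega
  · intro hg
    refine ⟨⟨(g:ℕ)-1, by omega⟩, ⟨(g:ℕ)+1, by omega⟩, by first | (simp; omega) | simp | omega, by simp, ?_, ?_⟩
    · rw [insW_lo 2 f N g ⟨(g:ℕ)-1, by omega⟩ (by show (g:ℕ)-1 < g; omega), insW_mid _ _ _ _ _ (by simp) (by simp)]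
      exact hN _
    · rw [insW_mid _ _ _ _ _ (by simp) (by simp), insW_mid _ _ _ _ _ (by simp) (by first | (simp; omega) | simp | omega)]

lemma ap_pivot1 :
    ((⟨(g:ℕ)+1, by have := g.isLt; omega⟩ : Fin (m+2)) ∉ apFilter (insW 2 f N g)) := by
  have hgm := g.isLt
  rw [mem_apFilter]
  rintro ⟨j, k, hj, -, hlt, -⟩
  simp at hj
  rw [insW_mid _ _ _ _ _ (by omega) (by omega), insW_mid _ _ _ _ _ (by simp) (by first | (simp; omega) | simp | omega)] at hlt
  exact absurd hlt (lt_irrefl N)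

lemma ap_iota (i : Fin m) :
    (ιW 2 g i ∈ apFilter (insW 2 f N g)) ↔
      (¬((i:ℕ) = (g:ℕ) ∨ (i:ℕ)+1 = (g:ℕ)) ∧ i ∈ apFilter f) := by
  have hiv := ιW_val 2 g i
  have him := i.isLt
  have hgm := g.isLt
  rw [mem_apFilter, mem_apFilter]
  constructor
  · rintro ⟨j, k, hj1, hk1, hlt, heq⟩
    rw [insW_apply_ιW] at hlt heq
    rw [hiv] at hj1 hk1
    by_cases hig : (i:ℕ) = (g:ℕ)
    · exfalso
      rw [if_neg (by omega)] at hj1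
      have hj_val : (j:ℕ) = (g:ℕ)+1 := by omega
      rw [insW_mid _ _ _ _ _ (by omega) (by omega)] at hlt
      exact absurd hlt (not_lt.mpr (le_of_lt (hN i)))
    · by_cases hig1 : (i:ℕ)+1 = (g:ℕ)
      · exfalso
        rw [if_pos (by omega)] at hk1
        have hk_val : (k:ℕ) = (g:ℕ) := by omega
        rw [insW_mid _ _ _ _ _ (by omega) (by omega)] at heq
        exact absurd heq (ne_of_lt (hN i))
      · refine ⟨by omega, ?_⟩
        by_cases hlt2 : (i:ℕ) < (g:ℕ)
        · -- i+1 < g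
          rw [if_pos hlt2] at hj1 hk1
          rw [insW_lo _ _ _ _ _ (by omega)] at hlt
          rw [insW_lo _ _ _ _ _ (by omega)] at heq
          exact ⟨⟨(j:ℕ), by omega⟩, ⟨(k:ℕ), by omega⟩, by first | (simp; omega) | simp | omega, by first | (simp; omega) | simp | omega, hlt, heq⟩
        · -- i > g
          rw [if_neg hlt2] at hj1 hk1
          rw [insW_hi _ _ _ _ _ (by omega)] at hlt
          rw [insW_hi _ _ _ _ _ (by omega)] at heq
          refine ⟨⟨(j:ℕ)-2, by omega⟩, ⟨(k:ℕ)-2, by omega⟩, by first | (simp; omega) | simp | omega, by first | (simp; omega) | simp | omega, hlt, heq⟩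
  · rintro ⟨hng, j', k', hj'1, hk'1, hlt, heq⟩
    by_cases hlt2 : (i:ℕ) < (g:ℕ)
    · -- then i+1 < g since i+1 ≠ g and i+1 ≤ g
      have hi1 : (i:ℕ)+1 < (g:ℕ) := by omega
      refine ⟨⟨(j':ℕ), by omega⟩, ⟨(k':ℕ), by omega⟩,
        by first | (simp [hiv, if_pos hlt2]; omega) | simp [hiv, if_pos hlt2], by first | (simp [hiv, if_pos hlt2]; omega) | simp [hiv, if_pos hlt2], ?_, ?_⟩
      · rw [insW_apply_ιW, insW_lo _ _ _ _ _ (by first | (simp; omega) | simp | omega)]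
        exact hlt
      · rw [insW_apply_ιW, insW_lo _ _ _ _ _ (by first | (simp; omega) | simp | omega)]
        have : (⟨((⟨(k':ℕ), by omega⟩ : Fin (m+2)):ℕ), by first | (simp; omega) | simp | omega⟩ : Fin m) = k' :=
          Fin.ext (by simp)
        rw [this]; exact heq
    · have hgi : (g:ℕ) < (i:ℕ) := by omega
      refine ⟨⟨(i:ℕ)+1, by omega⟩, ⟨(i:ℕ)+3, by omega⟩,
        by first | (simp [hiv, if_neg hlt2]; omega) | simp [hiv, if_neg hlt2], by simp [hiv, if_neg hlt2], ?_, ?_⟩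
      · rw [insW_apply_ιW, insW_hi _ _ _ _ _ (by first | (simp; omega) | simp | omega)]
        have : (⟨((⟨(i:ℕ)+1, by omega⟩ : Fin (m+2)):ℕ)-2, by first | (simp; omega) | simp | omega⟩ : Fin m) = j' :=
          Fin.ext (by first | (simp; omega) | simp | omega)
        rw [this]; exact hlt
      · rw [insW_apply_ιW, insW_hi _ _ _ _ _ (by first | (simp; omega) | simp | omega)]
        have : (⟨((⟨(i:ℕ)+3, by omega⟩ : Fin (m+2)):ℕ)-2, by first | (simp; omega) | simp | omega⟩ : Fin m) = k' :=
          Fin.ext (by first | (simp; omega) | simp | omega)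
        rw [this]; exact heq

end Ap
section Counts
variable {α : Type*} [LinearOrder α] {m : ℕ} (f : Fin m → α) (N : α) (g : Fin (m+1))
  (hN : ∀ i, f i < N)

lemma ascFilter_pos {i : Fin m} (h : i ∈ ascFilter f) : 1 ≤ (i:ℕ) := by
  rw [mem_ascFilter] at h; obtain ⟨j, hj, -⟩ := h; omega

lemma apFilter_pos {i : Fin m} (h : i ∈ apFilter f) : 1 ≤ (i:ℕ) := by
  rw [mem_apFilter] at h; obtain ⟨j, k, hj, -, -, -⟩ := h; omega

lemma apFilter_not_adj {i j : Fin m} (hi : i ∈ apFilter f) (hj : j ∈ apFilter f)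
    (hij : (i:ℕ)+1 = (j:ℕ)) : False := by
  rw [mem_apFilter] at hi hj
  obtain ⟨ji, ki, h1, h2, h3, h4⟩ := hi
  obtain ⟨jj, kj, h1', h2', h3', h4'⟩ := hj
  have hki : ki = j := Fin.ext (by omega)
  have hjj : jj = i := Fin.ext (by omega)
  rw [hki] at h4
  rw [hjj] at h3'
  rw [h4] at h3'
  exact absurd h3' (lt_irrefl _)

include hN

lemma lrminCount_insW :
    lrminCount (insW 1 f N g) = lrminCount f + (if (g:ℕ) = 0 then 1 else 0) := by
  unfold lrminCount
  rw [card_eq_sum_ind, sum_gap_split 1 g]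
  have hpiv : ∀ (h : (g:ℕ)+((0:Fin 1):ℕ) < m+1),
      (⟨(g:ℕ)+((0:Fin 1):ℕ), h⟩ : Fin (m+1)) = g := fun h => Fin.ext (by simp)
  rw [Fin.sum_univ_one, hpiv]
  rw [if_congr (lrmin_pivot f N g hN) rfl rfl]
  simp only [lrmin_iota f N g hN]
  rw [← card_eq_sum_ind]
  exact Nat.add_comm _ _

lemma ascCount_insW :
    ascCount (insW 1 f N g) = (if (g:ℕ) = 0 then 0 else 1)
      + ∑ i : Fin m, (if (i:ℕ) = (g:ℕ) then 0 else if i ∈ ascFilter f then 1 else 0) := by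
  unfold ascCount
  rw [card_eq_sum_ind, sum_gap_split 1 g]
  have hpiv : ∀ (h : (g:ℕ)+((0:Fin 1):ℕ) < m+1),
      (⟨(g:ℕ)+((0:Fin 1):ℕ), h⟩ : Fin (m+1)) = g := fun h => Fin.ext (by simp)
  rw [Fin.sum_univ_one, hpiv]
  rw [if_congr (asc_pivot f N g hN) rfl rfl]
  congr 1
  · by_cases h : (g:ℕ) = 0 <;> simp [h]
  · refine Finset.sum_congr rfl fun i _ => ?_
    by_cases h : (i:ℕ) = (g:ℕ)
    · rw [if_pos h, if_neg (by rw [asc_iota f N g hN]; tauto)]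
    · rw [if_neg h, if_congr (show (ιW 1 g i ∈ ascFilter (insW 1 f N g)) ↔ i ∈ ascFilter f by
        rw [asc_iota f N g hN]; tauto) rfl rfl]

lemma apCount_insW :
    apCount (insW 2 f N g) = (if (g:ℕ) = 0 then 0 else 1)
      + ∑ i : Fin m, (if ((i:ℕ) = (g:ℕ) ∨ (i:ℕ)+1 = (g:ℕ)) then 0
          else if i ∈ apFilter f then 1 else 0) := by
  unfold apCount
  rw [card_eq_sum_ind, sum_gap_split 2 g]
  rw [Fin.sum_univ_two]
  have h0 : ((0:Fin 2):ℕ) = 0 := rfl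
  have h1 : ((1:Fin 2):ℕ) = 1 := rfl
  have hpiv0 : ∀ (h : (g:ℕ)+((0:Fin 2):ℕ) < m+2),
      (⟨(g:ℕ)+((0:Fin 2):ℕ), h⟩ : Fin (m+2)) = ⟨(g:ℕ), by have := g.isLt; omega⟩ :=
    fun h => Fin.ext (by simp)
  have hpiv1 : ∀ (h : (g:ℕ)+((1:Fin 2):ℕ) < m+2),
      (⟨(g:ℕ)+((1:Fin 2):ℕ), h⟩ : Fin (m+2)) = ⟨(g:ℕ)+1, by have := g.isLt; omega⟩ :=
    fun h => Fin.ext (by simp)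
  rw [hpiv0, hpiv1]
  rw [if_congr (ap_pivot0 f N g hN) rfl rfl, if_neg (ap_pivot1 f N g hN)]
  congr 1
  · by_cases h : (g:ℕ) = 0 <;> simp [h]
  · refine Finset.sum_congr rfl fun i _ => ?_
    by_cases h : ((i:ℕ) = (g:ℕ) ∨ (i:ℕ)+1 = (g:ℕ))
    · rw [if_pos h, if_neg (by rw [ap_iota f N g hN]; tauto)]
    · rw [if_neg h, if_congr (show (ιW 2 g i ∈ apFilter (insW 2 f N g)) ↔ i ∈ apFilter f by
        rw [ap_iota f N g hN]; tauto) rfl rfl]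

lemma ascCount_insW_zero (hg : (g:ℕ) = 0) : ascCount (insW 1 f N g) = ascCount f := by
  rw [ascCount_insW f N g hN, if_pos hg]
  rw [Nat.zero_add]
  rw [show ascCount f = ∑ i : Fin m, (if i ∈ ascFilter f then 1 else 0) from card_eq_sum_ind _]
  refine Finset.sum_congr rfl fun i _ => ?_
  by_cases h : (i:ℕ) = (g:ℕ)
  · rw [if_pos h, eq_comm, if_neg]
    intro hmem
    have := ascFilter_pos f hmem
    omega
  · rw [if_neg h]

lemma ascCount_insW_asc {a : Fin m} (ha : a ∈ ascFilter f) (hga : (g:ℕ) = (a:ℕ)) :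
    ascCount (insW 1 f N g) = ascCount f := by
  have haval := ascFilter_pos f ha
  rw [ascCount_insW f N g hN, if_neg (by omega)]
  have hpt : ∀ i : Fin m, (if (i:ℕ) = (g:ℕ) then 0 else if i ∈ ascFilter f then 1 else 0)
      = if i = a then 0 else (if i ∈ ascFilter f then 1 else 0) := by
    intro i
    by_cases h : i = a
    · rw [if_pos h, if_pos (by rw [h, hga])]
    · rw [if_neg h, if_neg (by rw [Fin.ext_iff] at h; omega)]
  rw [Finset.sum_congr rfl fun i _ => hpt i]
  rw [show ascCount f = ∑ i : Fin m, (if i ∈ ascFilter f then 1 else 0) from card_eq_sum_ind _]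
  rw [← Finset.add_sum_erase _ _ (Finset.mem_univ a), ← Finset.add_sum_erase _ _ (Finset.mem_univ a)]
  rw [if_pos rfl, if_pos ha]
  rw [Finset.sum_congr rfl fun i hi => if_neg (Finset.ne_of_mem_erase hi)]
  omega

lemma ascCount_insW_nonasc (hg : (g:ℕ) ≠ 0) (hna : ∀ a ∈ ascFilter f, (g:ℕ) ≠ (a:ℕ)) :
    ascCount (insW 1 f N g) = ascCount f + 1 := by
  rw [ascCount_insW f N g hN, if_neg hg]
  have hpt : ∀ i : Fin m, (if (i:ℕ) = (g:ℕ) then 0 else if i ∈ ascFilter f then 1 else 0)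
      = (if i ∈ ascFilter f then 1 else 0) := by
    intro i
    by_cases h : (i:ℕ) = (g:ℕ)
    · rw [if_pos h, eq_comm, if_neg]
      intro hmem
      exact absurd h.symm (hna i hmem)
    · rw [if_neg h]
  rw [Finset.sum_congr rfl fun i _ => hpt i, ← card_eq_sum_ind]
  exact Nat.add_comm _ _

lemma apCount_insW_zero (hg : (g:ℕ) = 0) : apCount (insW 2 f N g) = apCount f := by
  rw [apCount_insW f N g hN, if_pos hg, Nat.zero_add]
  rw [show apCount f = ∑ i : Fin m, (if i ∈ apFilter f then 1 else 0) from card_eq_sum_ind _]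
  refine Finset.sum_congr rfl fun i _ => ?_
  by_cases h : ((i:ℕ) = (g:ℕ) ∨ (i:ℕ)+1 = (g:ℕ))
  · rw [if_pos h, eq_comm, if_neg]
    intro hmem
    have := apFilter_pos f hmem
    omega
  · rw [if_neg h]

lemma apCount_insW_ap {a : Fin m} (ha : a ∈ apFilter f)
    (hga : (g:ℕ) = (a:ℕ) ∨ (g:ℕ) = (a:ℕ)+1) :
    apCount (insW 2 f N g) = apCount f := by
  have hap := apFilter_pos f ha
  rw [apCount_insW f N g hN, if_neg (by omega)]
  have hpt : ∀ i : Fin m, (if ((i:ℕ) = (g:ℕ) ∨ (i:ℕ)+1 = (g:ℕ)) then 0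
        else if i ∈ apFilter f then 1 else 0)
      = if i = a then 0 else (if i ∈ apFilter f then 1 else 0) := by
    intro i
    by_cases h : i = a
    · rw [if_pos h, if_pos (by rw [h]; omega)]
    · rw [if_neg h]
      rw [Fin.ext_iff] at h
      by_cases h2 : ((i:ℕ) = (g:ℕ) ∨ (i:ℕ)+1 = (g:ℕ))
      · rw [if_pos h2, eq_comm, if_neg]
        intro hmem
        rcases hga with hga | hga <;> rcases h2 with h2 | h2
        · omega
        · exact apFilter_not_adj f hmem ha (by omega)
        · exact apFilter_not_adj f ha hmem (by omega)
        · omega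
      · rw [if_neg h2]
  rw [Finset.sum_congr rfl fun i _ => hpt i]
  rw [show apCount f = ∑ i : Fin m, (if i ∈ apFilter f then 1 else 0) from card_eq_sum_ind _]
  rw [← Finset.add_sum_erase _ _ (Finset.mem_univ a), ← Finset.add_sum_erase _ _ (Finset.mem_univ a)]
  rw [if_pos rfl, if_pos ha]
  rw [Finset.sum_congr rfl fun i hi => if_neg (Finset.ne_of_mem_erase hi)]
  omega

lemma apCount_insW_nonap (hg : (g:ℕ) ≠ 0)
    (hna : ∀ a ∈ apFilter f, (g:ℕ) ≠ (a:ℕ) ∧ (g:ℕ) ≠ (a:ℕ)+1) :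
    apCount (insW 2 f N g) = apCount f + 1 := by
  rw [apCount_insW f N g hN, if_neg hg]
  have hpt : ∀ i : Fin m, (if ((i:ℕ) = (g:ℕ) ∨ (i:ℕ)+1 = (g:ℕ)) then 0
        else if i ∈ apFilter f then 1 else 0)
      = (if i ∈ apFilter f then 1 else 0) := by
    intro i
    by_cases h : ((i:ℕ) = (g:ℕ) ∨ (i:ℕ)+1 = (g:ℕ))
    · rw [if_pos h, eq_comm, if_neg]
      intro hmem
      have := hna i hmem
      omega
    · rw [if_neg h]
  rw [Finset.sum_congr rfl fun i _ => hpt i, ← card_eq_sum_ind]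
  exact Nat.add_comm _ _

end Counts
section GapSums
open Polynomial
variable {α : Type*} [LinearOrder α] {m : ℕ} (f : Fin m → α) (N : α)
  (hN : ∀ i, f i < N)

lemma lrminCount_le : lrminCount f ≤ m := by
  have := Finset.card_le_univ (lrminFilter f)
  simpa [lrminCount] using this

lemma ascCount_le : ascCount f ≤ m := by
  have := Finset.card_le_univ (ascFilter f)
  simpa [ascCount] using this

include hN

lemma perm_gap_sum :
    ∑ g : Fin (m+1), (X : Polynomial ℤ) ^ ascCount (insW 1 f N g)
        * 2 ^ ((m+1) - lrminCount (insW 1 f N g))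
      = 2 ^ (m - lrminCount f) * ((1 + 2*(ascCount f : Polynomial ℤ)) * X ^ ascCount f
          + 2*((m:Polynomial ℤ) - (ascCount f : Polynomial ℤ)) * X ^ (ascCount f + 1)) := by
  have hl : lrminCount f ≤ m := lrminCount_le f
  have ha : ascCount f ≤ m := ascCount_le f
  set T : Fin (m+1) → Polynomial ℤ := fun g => (X : Polynomial ℤ) ^ ascCount (insW 1 f N g)
        * 2 ^ ((m+1) - lrminCount (insW 1 f N g)) with hT
  set A' : Finset (Fin (m+1)) := (ascFilter f).image Fin.castSucc with hA'
  have h0A : (0 : Fin (m+1)) ∉ A' := by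
    rw [hA']
    simp only [Finset.mem_image, not_exists]
    rintro b ⟨hb, hb2⟩
    have := ascFilter_pos f hb
    have : (Fin.castSucc b : ℕ) = 0 := by rw [hb2]; rfl
    simp at this
    omega
  set s : Finset (Fin (m+1)) := insert 0 A' with hs
  have hcardA : A'.card = ascCount f := by
    rw [hA', Finset.card_image_of_injective _ (Fin.castSucc_injective m)]; rfl
  have hcards : s.card = ascCount f + 1 := by
    rw [hs, Finset.card_insert_of_notMem h0A, hcardA]
  have hT0 : T 0 = X ^ ascCount f * 2 ^ (m - lrminCount f) := by
    rw [hT]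
    dsimp only
    have hg0 : ((0 : Fin (m+1)):ℕ) = 0 := rfl
    rw [ascCount_insW_zero f N 0 hN hg0, lrminCount_insW f N 0 hN, if_pos hg0]
    rw [show m + 1 - (lrminCount f + 1) = m - lrminCount f by have := lrminCount_le f; omega]
  have hTA : ∀ g ∈ A', T g = X ^ ascCount f * (2 ^ (m - lrminCount f) * 2) := by
    intro g hg
    rw [hA', Finset.mem_image] at hg
    obtain ⟨b, hb, rfl⟩ := hg
    have hvb : ((Fin.castSucc b : Fin (m+1)):ℕ) = (b:ℕ) := rfl
    rw [hT]
    dsimp only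
    rw [ascCount_insW_asc f N _ hN hb hvb, lrminCount_insW f N _ hN,
      if_neg (by have := ascFilter_pos f hb; omega)]
    rw [show m + 1 - (lrminCount f + 0) = (m - lrminCount f) + 1 by omega, pow_succ]
  have hTrest : ∀ g ∈ Finset.univ \ s, T g = X ^ (ascCount f + 1) * (2 ^ (m - lrminCount f) * 2) := by
    intro g hg
    rw [Finset.mem_sdiff, hs, Finset.mem_insert] at hg
    push_neg at hg
    obtain ⟨-, hg0, hgA⟩ := hg
    have hgv : (g:ℕ) ≠ 0 := by
      intro h
      exact hg0 (Fin.ext h)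
    have hna : ∀ b ∈ ascFilter f, (g:ℕ) ≠ (b:ℕ) := by
      intro b hb hval
      apply hgA
      rw [hA', Finset.mem_image]
      exact ⟨b, hb, Fin.ext hval.symm⟩
    rw [hT]
    dsimp only
    rw [ascCount_insW_nonasc f N _ hN hgv hna, lrminCount_insW f N _ hN, if_neg hgv]
    rw [show m + 1 - (lrminCount f + 0) = (m - lrminCount f) + 1 by omega, pow_succ]
    ring
  have hsplit : ∑ g : Fin (m+1), T g = ∑ g ∈ Finset.univ \ s, T g + ∑ g ∈ s, T g :=
    (Finset.sum_sdiff (Finset.subset_univ s)).symm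
  rw [hsplit]
  rw [Finset.sum_congr rfl hTrest, hs, Finset.sum_insert h0A, Finset.sum_congr rfl hTA]
  rw [Finset.sum_const, Finset.sum_const, hT0, hcardA]
  have hcard_sdiff : (Finset.univ \ s).card = m - ascCount f := by
    rw [Finset.card_sdiff_of_subset (Finset.subset_univ s), hcards, Finset.card_univ, Fintype.card_fin]
    omega
  rw [hcard_sdiff, nsmul_eq_mul, nsmul_eq_mul]
  rw [Nat.cast_sub ha]
  push_cast
  ring

lemma stirling_gap_sum :
    ∑ g : Fin (m+1), (X : Polynomial ℤ) ^ apCount (insW 2 f N g)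
      = (1 + 2*(apCount f : Polynomial ℤ)) * X ^ apCount f
          + ((m:Polynomial ℤ) - 2*(apCount f : Polynomial ℤ)) * X ^ (apCount f + 1) := by
  set T : Fin (m+1) → Polynomial ℤ := fun g => (X : Polynomial ℤ) ^ apCount (insW 2 f N g) with hT
  set A1 : Finset (Fin (m+1)) := (apFilter f).image Fin.castSucc with hA1
  set A2 : Finset (Fin (m+1)) := (apFilter f).image Fin.succ with hA2
  have hvsucc : ∀ b : Fin m, ((Fin.succ b : Fin (m+1)):ℕ) = (b:ℕ)+1 := fun b => rfl
  have hvcast : ∀ b : Fin m, ((Fin.castSucc b : Fin (m+1)):ℕ) = (b:ℕ) := fun b => rfl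
  have hdisj : Disjoint A1 A2 := by
    rw [Finset.disjoint_left]
    intro x hx1 hx2
    rw [hA1, Finset.mem_image] at hx1
    rw [hA2, Finset.mem_image] at hx2
    obtain ⟨b, hb, rfl⟩ := hx1
    obtain ⟨b', hb', hbe⟩ := hx2
    have : (b':ℕ)+1 = (b:ℕ) := by rw [← hvsucc b', hbe, hvcast]
    exact apFilter_not_adj f hb' hb this
  have h0A : (0 : Fin (m+1)) ∉ A1 ∪ A2 := by
    rw [Finset.mem_union, hA1, hA2]
    simp only [Finset.mem_image, not_or, not_exists]
    constructor
    · rintro b ⟨hb, hb2⟩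
      have := apFilter_pos f hb
      have h2 : ((Fin.castSucc b : Fin (m+1)):ℕ) = 0 := by rw [hb2]; rfl
      rw [hvcast] at h2
      omega
    · rintro b ⟨hb, hb2⟩
      have h2 : ((Fin.succ b : Fin (m+1)):ℕ) = 0 := by rw [hb2]; rfl
      rw [hvsucc] at h2
      omega
  set s : Finset (Fin (m+1)) := insert 0 (A1 ∪ A2) with hs
  have hcardA : (A1 ∪ A2).card = 2 * apCount f := by
    rw [Finset.card_union_of_disjoint hdisj, hA1, hA2,
      Finset.card_image_of_injective _ (Fin.castSucc_injective m),
      Finset.card_image_of_injective _ (Fin.succ_injective m)]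
    show apCount f + apCount f = 2 * apCount f
    omega
  have hcards : s.card = 2 * apCount f + 1 := by
    rw [hs, Finset.card_insert_of_notMem h0A, hcardA]
  have hcs_le : 2 * apCount f + 1 ≤ m + 1 := by
    rw [← hcards]
    have := Finset.card_le_univ s
    simpa using this
  have hTs : ∀ g ∈ s, T g = X ^ apCount f := by
    intro g hg
    rw [hs, Finset.mem_insert, Finset.mem_union] at hg
    rw [hT]
    dsimp only
    rcases hg with rfl | hg | hg
    · rw [apCount_insW_zero f N 0 hN rfl]
    · rw [hA1, Finset.mem_image] at hg
      obtain ⟨b, hb, rfl⟩ := hg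
      rw [apCount_insW_ap f N _ hN hb (Or.inl (hvcast b))]
    · rw [hA2, Finset.mem_image] at hg
      obtain ⟨b, hb, rfl⟩ := hg
      rw [apCount_insW_ap f N _ hN hb (Or.inr (hvsucc b))]
  have hTrest : ∀ g ∈ Finset.univ \ s, T g = X ^ (apCount f + 1) := by
    intro g hg
    rw [Finset.mem_sdiff, hs, Finset.mem_insert, Finset.mem_union] at hg
    push_neg at hg
    obtain ⟨-, hg0, hgA1, hgA2⟩ := hg
    have hgv : (g:ℕ) ≠ 0 := fun h => hg0 (Fin.ext h)
    have hna : ∀ b ∈ apFilter f, (g:ℕ) ≠ (b:ℕ) ∧ (g:ℕ) ≠ (b:ℕ)+1 := by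
      intro b hb
      constructor
      · intro hval
        apply hgA1
        rw [hA1, Finset.mem_image]
        exact ⟨b, hb, Fin.ext (by rw [hvcast]; omega)⟩
      · intro hval
        apply hgA2
        rw [hA2, Finset.mem_image]
        exact ⟨b, hb, Fin.ext (by rw [hvsucc]; omega)⟩
    rw [hT]
    dsimp only
    rw [apCount_insW_nonap f N _ hN hgv hna]
  have hsplit : ∑ g : Fin (m+1), T g = ∑ g ∈ Finset.univ \ s, T g + ∑ g ∈ s, T g :=
    (Finset.sum_sdiff (Finset.subset_univ s)).symm
  rw [hsplit, Finset.sum_congr rfl hTrest, Finset.sum_congr rfl hTs]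
  rw [Finset.sum_const, Finset.sum_const, hcards]
  have hcard_sdiff : (Finset.univ \ s).card = m - 2 * apCount f := by
    rw [Finset.card_sdiff_of_subset (Finset.subset_univ s), hcards, Finset.card_univ, Fintype.card_fin]
    omega
  rw [hcard_sdiff, nsmul_eq_mul, nsmul_eq_mul]
  rw [Nat.cast_sub (by omega)]
  push_cast
  ring

end GapSums
section Phi
open Polynomial

noncomputable def PhiOp (n : ℕ) (P : Polynomial ℤ) : Polynomial ℤ :=
  (1 + 2*(n : Polynomial ℤ)*X) * P + (2*X - 2*X^2) * Polynomial.derivative P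

lemma PhiOp_pow (n c : ℕ) :
    PhiOp n ((X : Polynomial ℤ)^c)
      = (1 + 2*(c : Polynomial ℤ)) * X^c + 2*((n:Polynomial ℤ) - (c:Polynomial ℤ)) * X^(c+1) := by
  unfold PhiOp
  cases c with
  | zero => simp
  | succ c =>
    rw [derivative_X_pow]
    rw [show ((c+1) - 1 : ℕ) = c from rfl]
    push_cast
    simp only [map_add, map_one, Polynomial.C_eq_natCast]
    push_cast
    ring

lemma PhiOp_sum {γ : Type*} (s : Finset γ) (F : γ → Polynomial ℤ) (n : ℕ) :
    PhiOp n (∑ x ∈ s, F x) = ∑ x ∈ s, PhiOp n (F x) := by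
  unfold PhiOp
  rw [map_sum, Finset.mul_sum, Finset.mul_sum, ← Finset.sum_add_distrib]

lemma PhiOp_mul_const (n : ℕ) (P : Polynomial ℤ) (q : ℕ) :
    PhiOp n (P * 2^q) = PhiOp n P * 2^q := by
  have h2 : ((2:Polynomial ℤ))^q = Polynomial.C ((2:ℤ)^q) := by
    rw [map_pow]
    norm_num
  rw [h2]
  unfold PhiOp
  rw [derivative_mul, derivative_C]
  ring

end Phi
section PermStep
open Polynomial

variable {n : ℕ}

lemma castSucc_strictMono' : StrictMono (Fin.castSucc : Fin n → Fin (n+1)) :=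
  fun _ _ h => by rwa [Fin.castSucc_lt_castSucc_iff]

def insPword (π : Equiv.Perm (Fin n)) (g : Fin (n+1)) : Fin (n+1) → Fin (n+1) :=
  insW 1 (fun i => (π i).castSucc) (Fin.last n) g

lemma insPword_hN (π : Equiv.Perm (Fin n)) : ∀ i, ((π i).castSucc : Fin (n+1)) < Fin.last n :=
  fun i => Fin.castSucc_lt_last _

lemma insPword_eq_last_iff (π : Equiv.Perm (Fin n)) (g : Fin (n+1)) (p : Fin (n+1)) :
    insPword π g p = Fin.last n ↔ p = g := by
  constructor
  · intro h
    rcases insW_cases 1 (fun i => (π i).castSucc) (Fin.last n) g p with ⟨h1, h2, -⟩ | ⟨i, rfl⟩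
    · exact Fin.ext (by omega)
    · rw [insPword, insW_apply_ιW] at h
      exact absurd h (Fin.castSucc_lt_last _).ne
  · rintro rfl
    exact insW_mid _ _ _ _ _ (le_refl _) (by omega)

lemma insPword_injective (π : Equiv.Perm (Fin n)) (g : Fin (n+1)) :
    Function.Injective (insPword π g) := by
  intro p q h
  simp only [insPword] at h
  rcases insW_cases 1 (fun i => (π i).castSucc) (Fin.last n) g p with ⟨h1, h2, h3⟩ | ⟨i, rfl⟩ <;>
    rcases insW_cases 1 (fun i => (π i).castSucc) (Fin.last n) g q with ⟨h1', h2', h3'⟩ | ⟨j, rfl⟩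
  · exact Fin.ext (by omega)
  · rw [insW_apply_ιW] at h
    rw [h3] at h
    exact absurd h.symm (Fin.castSucc_lt_last _).ne
  · rw [insW_apply_ιW] at h
    rw [h3'] at h
    exact absurd h (Fin.castSucc_lt_last _).ne
  · rw [insW_apply_ιW, insW_apply_ιW] at h
    have : π i = π j := Fin.castSucc_injective _ h
    rw [π.injective this]

noncomputable def insP (π : Equiv.Perm (Fin n)) (g : Fin (n+1)) : Equiv.Perm (Fin (n+1)) :=
  Equiv.ofBijective _ ((Finite.injective_iff_bijective).mp (insPword_injective π g))

lemma insP_coe (π : Equiv.Perm (Fin n)) (g : Fin (n+1)) : ⇑(insP π g) = insPword π g := rfl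

lemma insP_injective :
    Function.Injective (fun pr : Equiv.Perm (Fin n) × Fin (n+1) => insP pr.1 pr.2) := by
  rintro ⟨π, g⟩ ⟨π', g'⟩ h
  simp only at h
  have hw : insPword π g = insPword π' g' := by
    rw [← insP_coe, ← insP_coe, h]
  have hg : g = g' := by
    have h1 : insPword π' g' g = Fin.last n := by
      rw [← hw]
      exact (insPword_eq_last_iff π g g).mpr rfl
    exact ((insPword_eq_last_iff π' g' g).mp h1)
  subst hg
  have hπ : π = π' := by
    apply Equiv.ext
    intro i
    have := congrFun hw (ιW 1 g i)
    rw [insPword, insPword, insW_apply_ιW, insW_apply_ιW] at this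
    exact Fin.castSucc_injective _ this
  rw [hπ]

lemma perm_step (n : ℕ) :
    ∑ ρ : Equiv.Perm (Fin (n+1)),
        (X : Polynomial ℤ) ^ ascCount ⇑ρ * 2 ^ ((n+1) - lrminCount ⇑ρ)
      = ∑ π : Equiv.Perm (Fin n),
          2 ^ (n - lrminCount ⇑π) * ((1 + 2*(ascCount ⇑π : Polynomial ℤ)) * X ^ ascCount ⇑π
            + 2*((n:Polynomial ℤ) - (ascCount ⇑π : Polynomial ℤ)) * X ^ (ascCount ⇑π + 1)) := by
  have hbij : Function.Bijective
      (fun pr : Equiv.Perm (Fin n) × Fin (n+1) => insP pr.1 pr.2) := by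
    rw [Fintype.bijective_iff_injective_and_card]
    refine ⟨insP_injective, ?_⟩
    simp [Fintype.card_perm, Nat.factorial_succ, Nat.mul_comm]
  rw [← Fintype.sum_bijective _ hbij _
      (fun ρ => (X : Polynomial ℤ) ^ ascCount ⇑ρ * 2 ^ ((n+1) - lrminCount ⇑ρ)) (fun pr => rfl)]
  rw [Fintype.sum_prod_type]
  refine Finset.sum_congr rfl fun π _ => ?_
  have hconv : ∀ g : Fin (n+1),
      (X : Polynomial ℤ) ^ ascCount ⇑(insP π g) * 2 ^ ((n+1) - lrminCount ⇑(insP π g))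
        = (X : Polynomial ℤ) ^ ascCount (insW 1 (fun i => (π i).castSucc) (Fin.last n) g)
            * 2 ^ ((n+1) - lrminCount (insW 1 (fun i => (π i).castSucc) (Fin.last n) g)) := by
    intro g; rfl
  rw [Finset.sum_congr rfl fun g _ => hconv g]
  rw [perm_gap_sum (fun i => (π i).castSucc) (Fin.last n) (insPword_hN π)]
  have hasc : ascCount (fun i => ((π i).castSucc : Fin (n+1))) = ascCount ⇑π := by
    unfold ascCount
    rw [ascFilter_comp castSucc_strictMono']
  have hlr : lrminCount (fun i => ((π i).castSucc : Fin (n+1))) = lrminCount ⇑π := by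
    unfold lrminCount
    rw [lrminFilter_comp castSucc_strictMono']
  rw [hasc, hlr]

end PermStep
section StirlingStep
open Polynomial

variable {n : ℕ}

def insSword (σ : Fin (2*n) → Fin n) (g : Fin (2*n+1)) : Fin (2*n+2) → Fin (n+1) :=
  insW 2 (fun i => (σ i).castSucc) (Fin.last n) g

lemma insSword_hN (σ : Fin (2*n) → Fin n) :
    ∀ i, ((σ i).castSucc : Fin (n+1)) < Fin.last n := fun _ => Fin.castSucc_lt_last _

lemma insSword_mem {σ : Fin (2*n) → Fin n} (hσ : σ ∈ stirlingFinset n) (g : Fin (2*n+1)) :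
    insSword σ g ∈ stirlingFinset (n+1) := by
  rw [stirlingFinset, Finset.mem_filter] at hσ ⊢
  obtain ⟨-, hcnt, hord⟩ := hσ
  refine ⟨Finset.mem_univ _, ?_, ?_⟩
  · intro k
    rw [Finset.card_filter]
    show (∑ p : Fin (2*n+2), if insSword σ g p = k then (1:ℕ) else 0) = 2
    rw [sum_gap_split 2 g, Fin.sum_univ_two]
    have hva : ∀ (h : (g:ℕ)+((0:Fin 2):ℕ) < 2*n+2),
        insSword σ g ⟨(g:ℕ)+((0:Fin 2):ℕ), h⟩ = Fin.last n :=
      fun h => insW_mid _ _ _ _ _ (by simp) (by simp)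
    have hvb : ∀ (h : (g:ℕ)+((1:Fin 2):ℕ) < 2*n+2),
        insSword σ g ⟨(g:ℕ)+((1:Fin 2):ℕ), h⟩ = Fin.last n :=
      fun h => insW_mid _ _ _ _ _ (by simp) (by simp)
    rw [hva, hvb]
    have hiov : ∀ i : Fin (2*n), insSword σ g (ιW 2 g i) = (σ i).castSucc :=
      fun i => insW_apply_ιW _ _ _ _ _
    by_cases hk : k = Fin.last n
    · rw [if_pos hk.symm]
      have hz : ∀ i : Fin (2*n), (if insSword σ g (ιW 2 g i) = k then (1:ℕ) else 0) = 0 := by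
        intro i
        rw [hiov i, if_neg]
        rw [hk]
        exact (Fin.castSucc_lt_last _).ne
      rw [Finset.sum_congr rfl fun i _ => hz i]
      simp
    · have hklt : (k:ℕ) < n := by
        have := k.isLt
        have : (k:ℕ) ≠ n := fun hc => hk (Fin.ext (by rw [hc]; rfl))
        omega
      set k' : Fin n := ⟨(k:ℕ), hklt⟩ with hk'
      have hck : Fin.castSucc k' = k := Fin.ext rfl
      rw [if_neg (fun hc => hk hc.symm)]
      have hz : ∀ i : Fin (2*n),
          (if insSword σ g (ιW 2 g i) = k then (1:ℕ) else 0) = if σ i = k' then 1 else 0 := by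
        intro i
        refine if_congr ?_ rfl rfl
        rw [hiov i, ← hck, Fin.castSucc_inj]
      rw [Finset.sum_congr rfl fun i _ => hz i]
      have := hcnt k'
      rw [Finset.card_filter] at this
      rw [this]
  · intro p q r hpq hqr heq
    rcases insW_cases 2 (fun i => (σ i).castSucc) (Fin.last n) g p with ⟨hp1, hp2, hp3⟩ | ⟨ip, rfl⟩
    · -- p mid: r must be mid too, impossible with q strictly between
      exfalso
      have hwp : insSword σ g p = Fin.last n := hp3
      have hwr : insSword σ g r = Fin.last n := by rw [← heq]; exact hwp
      rcases insW_cases 2 (fun i => (σ i).castSucc) (Fin.last n) g r with ⟨hr1, hr2, -⟩ | ⟨ir, rfl⟩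
      · rw [Fin.lt_def] at hpq hqr
        omega
      · rw [show insSword σ g (ιW 2 g ir) = (σ ir).castSucc from insW_apply_ιW _ _ _ _ _] at hwr
        exact (Fin.castSucc_lt_last _).ne hwr
    · have hwp : insSword σ g (ιW 2 g ip) = (σ ip).castSucc := insW_apply_ιW _ _ _ _ _
      rcases insW_cases 2 (fun i => (σ i).castSucc) (Fin.last n) g r with ⟨hr1, hr2, hr3⟩ | ⟨ir, rfl⟩
      · exfalso
        have : insSword σ g r = Fin.last n := hr3
        rw [← heq, hwp] at this
        exact (Fin.castSucc_lt_last _).ne this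
      · have hwr : insSword σ g (ιW 2 g ir) = (σ ir).castSucc := insW_apply_ιW _ _ _ _ _
        have hσe : σ ip = σ ir := by
          have := heq
          rw [hwp, hwr] at this
          exact Fin.castSucc_injective _ this
        rcases insW_cases 2 (fun i => (σ i).castSucc) (Fin.last n) g q with ⟨hq1, hq2, hq3⟩ | ⟨iq, rfl⟩
        · rw [hwp, show insSword σ g q = Fin.last n from hq3]
          exact Fin.castSucc_lt_last _
        · have hwq : insSword σ g (ιW 2 g iq) = (σ iq).castSucc := insW_apply_ιW _ _ _ _ _
          rw [hwp, hwq, Fin.castSucc_lt_castSucc_iff]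
          exact hord ip iq ir (ιW_lt_ιW.mp hpq) (ιW_lt_ιW.mp hqr) hσe

lemma insSword_pair_inj {σ σ' : Fin (2*n) → Fin n} {g g' : Fin (2*n+1)}
    (h : insSword σ g = insSword σ' g') : σ = σ' ∧ g = g' := by
  have hlast : ∀ (w : Fin (2*n) → Fin n) (gg : Fin (2*n+1)) (p : Fin (2*n+2)),
      insSword w gg p = Fin.last n ↔ ((gg:ℕ) ≤ (p:ℕ) ∧ (p:ℕ) < (gg:ℕ)+2) := by
    intro w gg p
    constructor
    · intro hp
      rcases insW_cases 2 (fun i => (w i).castSucc) (Fin.last n) gg p with ⟨h1, h2, -⟩ | ⟨i, rfl⟩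
      · exact ⟨h1, h2⟩
      · rw [show insSword w gg (ιW 2 gg i) = (w i).castSucc from insW_apply_ιW _ _ _ _ _] at hp
        exact absurd hp (Fin.castSucc_lt_last _).ne
    · rintro ⟨h1, h2⟩
      exact insW_mid _ _ _ _ _ h1 h2
  have hgg := g.isLt
  have hgg' := g'.isLt
  have h1 : insSword σ' g' ⟨(g:ℕ), by omega⟩ = Fin.last n := by
    rw [← h]
    exact (hlast σ g _).mpr ⟨by simp, by simp⟩
  have h2 : insSword σ g ⟨(g':ℕ), by omega⟩ = Fin.last n := by
    rw [h]
    exact (hlast σ' g' _).mpr ⟨by simp, by simp⟩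
  rw [hlast] at h1 h2
  have hg : g = g' := Fin.ext (by simp at h1 h2; omega)
  subst hg
  refine ⟨?_, rfl⟩
  funext i
  have := congrFun h (ιW 2 g i)
  rw [show insSword σ g (ιW 2 g i) = (σ i).castSucc from insW_apply_ιW _ _ _ _ _,
    show insSword σ' g (ιW 2 g i) = (σ' i).castSucc from insW_apply_ιW _ _ _ _ _] at this
  exact Fin.castSucc_injective _ this

end StirlingStep
section StirlingStep2
open Polynomial

variable {n : ℕ}

lemma insSword_surj {τ : Fin (2*(n+1)) → Fin (n+1)} (hτ : τ ∈ stirlingFinset (n+1)) :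
    ∃ σ : Fin (2*n) → Fin n, ∃ g : Fin (2*n+1),
      σ ∈ stirlingFinset n ∧ insSword σ g = τ := by
  rw [stirlingFinset, Finset.mem_filter] at hτ
  obtain ⟨-, hcnt, hord⟩ := hτ
  have h2c := hcnt (Fin.last n)
  obtain ⟨a, b, hab, hset⟩ := Finset.card_eq_two.mp h2c
  have hmem : ∀ x : Fin (2*(n+1)), τ x = Fin.last n ↔ (x = a ∨ x = b) := by
    intro x
    constructor
    · intro hx
      have : x ∈ Finset.univ.filter (fun p => τ p = Fin.last n) := by
        rw [Finset.mem_filter]; exact ⟨Finset.mem_univ _, hx⟩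
      rw [hset, Finset.mem_insert, Finset.mem_singleton] at this
      exact this
    · rintro (rfl | rfl)
      · have : x ∈ Finset.univ.filter (fun p => τ p = Fin.last n) := by
          rw [hset]; exact Finset.mem_insert_self _ _
        exact (Finset.mem_filter.mp this).2
      · have : x ∈ Finset.univ.filter (fun p => τ p = Fin.last n) := by
          rw [hset]; exact Finset.mem_insert_of_mem (Finset.mem_singleton_self _)
        exact (Finset.mem_filter.mp this).2
  -- WLOG u < v with τ u = τ v = last
  suffices key : ∀ u v : Fin (2*(n+1)), u < v → τ u = Fin.last n → τ v = Fin.last n →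
      (∀ q : Fin (2*(n+1)), τ q = Fin.last n → q = u ∨ q = v) →
      ∃ σ : Fin (2*n) → Fin n, ∃ g : Fin (2*n+1), σ ∈ stirlingFinset n ∧ insSword σ g = τ by
    rcases hab.lt_or_gt with hlt | hlt
    · exact key a b hlt ((hmem a).mpr (Or.inl rfl)) ((hmem b).mpr (Or.inr rfl))
        (fun q hq => (hmem q).mp hq)
    · exact key b a hlt ((hmem b).mpr (Or.inr rfl)) ((hmem a).mpr (Or.inl rfl))
        (fun q hq => ((hmem q).mp hq).symm)
  intro u v huv hu hv hq
  have huv' : (u:ℕ) < (v:ℕ) := huv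
  have hvlt := v.isLt
  have hult := u.isLt
  have hvv : (v:ℕ) = (u:ℕ)+1 := by
    by_contra hne
    have hb : (u:ℕ)+1 < 2*(n+1) := by omega
    have h := hord u ⟨(u:ℕ)+1, hb⟩ v (by rw [Fin.lt_def]; simp) (by rw [Fin.lt_def]; simp; omega)
      (by rw [hu, hv])
    rw [hu] at h
    exact absurd h (not_lt.mpr (Fin.le_last _))
  set g : Fin (2*n+1) := ⟨(u:ℕ), by omega⟩ with hg
  have hgval : (g:ℕ) = (u:ℕ) := rfl
  have hne_last : ∀ i : Fin (2*n), τ (ιW 2 g i) ≠ Fin.last n := by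
    intro i hlast
    have hiv := ιW_val 2 g i
    have hilt := i.isLt
    rcases hq _ hlast with h | h
    · have : ((ιW 2 g i : Fin (2*n+2)):ℕ) = (u:ℕ) := by rw [h]
      rw [hiv] at this
      split at this <;> omega
    · have : ((ιW 2 g i : Fin (2*n+2)):ℕ) = (v:ℕ) := by rw [h]
      rw [hiv] at this
      split at this <;> omega
  set σ : Fin (2*n) → Fin n := fun i => ⟨(τ (ιW 2 g i) : ℕ), by
      have h1 := (τ (ιW 2 g i)).isLt
      have h2 : (τ (ιW 2 g i) : ℕ) ≠ n := fun hc => hne_last i (Fin.ext (by rw [hc]; rfl))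
      omega⟩ with hσ
  have hcast : ∀ i : Fin (2*n), (σ i).castSucc = τ (ιW 2 g i) := fun i => Fin.ext rfl
  refine ⟨σ, g, ?_, ?_⟩
  · rw [stirlingFinset, Finset.mem_filter]
    refine ⟨Finset.mem_univ _, ?_, ?_⟩
    · intro k'
      have h2k := hcnt (Fin.castSucc k')
      rw [Finset.card_filter] at h2k
      rw [show (∑ p : Fin (2*(n+1)), if τ p = Fin.castSucc k' then (1:ℕ) else 0)
          = ∑ p : Fin (2*n+2), if τ p = Fin.castSucc k' then (1:ℕ) else 0 from rfl] at h2k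
      rw [sum_gap_split 2 g, Fin.sum_univ_two] at h2k
      have hva : ∀ (h : (g:ℕ)+((0:Fin 2):ℕ) < 2*n+2), τ ⟨(g:ℕ)+((0:Fin 2):ℕ), h⟩ = Fin.last n := by
        intro h
        have he : (⟨(g:ℕ)+((0:Fin 2):ℕ), h⟩ : Fin (2*n+2)) = u := Fin.ext (by simp [hgval])
        rw [he, hu]
      have hvb : ∀ (h : (g:ℕ)+((1:Fin 2):ℕ) < 2*n+2), τ ⟨(g:ℕ)+((1:Fin 2):ℕ), h⟩ = Fin.last n := by
        intro h
        have he : (⟨(g:ℕ)+((1:Fin 2):ℕ), h⟩ : Fin (2*n+2)) = v := Fin.ext (by simp; omega)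
        rw [he, hv]
      rw [hva, hvb, if_neg (fun hc => (Fin.castSucc_lt_last k').ne' hc)] at h2k
      have hconv : ∀ i : Fin (2*n),
          (if σ i = k' then (1:ℕ) else 0) = if τ (ιW 2 g i) = Fin.castSucc k' then 1 else 0 := by
        intro i
        refine if_congr ?_ rfl rfl
        rw [← hcast i, Fin.castSucc_inj]
      rw [Finset.card_filter, Finset.sum_congr rfl fun i _ => hconv i]
      omega
    · intro p q r hpq hqr heq
      have heq' : τ (ιW 2 g p) = τ (ιW 2 g r) := by
        rw [← hcast p, ← hcast r]
        exact congrArg Fin.castSucc heq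
      have := hord (ιW 2 g p) (ιW 2 g q) (ιW 2 g r) (ιW_lt_ιW.mpr hpq) (ιW_lt_ιW.mpr hqr) heq'
      rw [← hcast p, ← hcast q, Fin.castSucc_lt_castSucc_iff] at this
      exact this
  · funext p
    rcases insW_cases 2 (fun i => (σ i).castSucc) (Fin.last n) g p with ⟨hp1, hp2, hp3⟩ | ⟨i, rfl⟩
    · rw [show insSword σ g p = Fin.last n from hp3]
      by_cases hpu : (p:ℕ) = (u:ℕ)
      · rw [show p = u from Fin.ext hpu, hu]
      · rw [show p = v from Fin.ext (by omega), hv]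
    · rw [show insSword σ g (ιW 2 g i) = (σ i).castSucc from insW_apply_ιW _ _ _ _ _]
      exact hcast i

lemma stirling_step (n : ℕ) :
    ∑ τ ∈ stirlingFinset (n+1), (X : Polynomial ℤ) ^ apCount τ
      = ∑ σ ∈ stirlingFinset n, ((1 + 2*(apCount σ : Polynomial ℤ)) * X ^ apCount σ
          + (((2*n : ℕ) : Polynomial ℤ) - 2*(apCount σ : Polynomial ℤ)) * X ^ (apCount σ + 1)) := by
  have hb : ∑ τ ∈ stirlingFinset (n+1), (X : Polynomial ℤ) ^ apCount τ
      = ∑ pr ∈ (stirlingFinset n) ×ˢ (Finset.univ : Finset (Fin (2*n+1))),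
          (X : Polynomial ℤ) ^ apCount (insSword pr.1 pr.2) := by
    refine (Finset.sum_bij (fun pr _ => insSword pr.1 pr.2) ?_ ?_ ?_ ?_).symm
    · rintro ⟨σ, g⟩ hpr
      rw [Finset.mem_product] at hpr
      exact insSword_mem hpr.1 g
    · rintro ⟨σ, g⟩ h1 ⟨σ', g'⟩ h2 h
      obtain ⟨hσ, hg⟩ := insSword_pair_inj h
      rw [Prod.mk.injEq]
      exact ⟨hσ, hg⟩
    · intro τ hτ
      obtain ⟨σ, g, hσ, hEq⟩ := insSword_surj hτ
      exact ⟨⟨σ, g⟩, Finset.mem_product.mpr ⟨hσ, Finset.mem_univ g⟩, hEq⟩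
    · intro pr hpr
      rfl
  rw [hb, Finset.sum_product]
  refine Finset.sum_congr rfl fun σ hσ => ?_
  have hgap := stirling_gap_sum (fun i => (σ i).castSucc) (Fin.last n) (insSword_hN σ)
  rw [show (∑ g : Fin (2*n+1), (X : Polynomial ℤ) ^ apCount (insSword σ g))
      = ∑ g : Fin (2*n+1), (X : Polynomial ℤ)
          ^ apCount (insW 2 (fun i => (σ i).castSucc) (Fin.last n) g) from rfl]
  rw [hgap]
  have hap : apCount (fun i => ((σ i).castSucc : Fin (n+1))) = apCount σ := by
    unfold apCount
    rw [apFilter_comp castSucc_strictMono']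
  rw [hap]

end StirlingStep2

section Main
open Polynomial

lemma main_identity : ∀ n : ℕ,
    ∑ σ ∈ stirlingFinset n, (Polynomial.X : Polynomial ℤ) ^ apCount σ
      = ∑ π : Equiv.Perm (Fin n),
          (Polynomial.X : Polynomial ℤ) ^ ascCount ⇑π * 2 ^ (n - lrminCount ⇑π) := by
  intro n
  induction n with
  | zero =>
    have h1 : stirlingFinset 0 = Finset.univ := by
      rw [stirlingFinset]
      refine Finset.filter_true_of_mem ?_
      intro f _
      exact ⟨fun k => k.elim0, fun p => p.elim0⟩
    rw [h1]
    rw [Fintype.sum_subsingleton _ (fun p : Fin (2*0) => p.elim0)]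
    rw [Fintype.sum_subsingleton _ (Equiv.refl (Fin 0))]
    have hap : apCount (fun p : Fin (2*0) => p.elim0 : Fin (2*0) → Fin 0) = 0 :=
      Nat.le_zero.mp (le_trans (Finset.card_le_univ _) (by simp))
    have hasc : ascCount ⇑(Equiv.refl (Fin 0)) = 0 :=
      Nat.le_zero.mp (le_trans (Finset.card_le_univ _) (by simp))
    have hlr : lrminCount ⇑(Equiv.refl (Fin 0)) = 0 :=
      Nat.le_zero.mp (le_trans (Finset.card_le_univ _) (by simp))
    rw [hap, hasc, hlr]
    simp
  | succ n IH =>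
    rw [stirling_step n, perm_step n]
    have hL : ∑ σ ∈ stirlingFinset n, ((1 + 2*(apCount σ : Polynomial ℤ)) * X ^ (apCount σ)
          + (((2*n:ℕ) : Polynomial ℤ) - 2*(apCount σ : Polynomial ℤ)) * X ^ (apCount σ + 1))
        = PhiOp n (∑ σ ∈ stirlingFinset n, (X : Polynomial ℤ) ^ apCount σ) := by
      rw [PhiOp_sum]
      refine Finset.sum_congr rfl fun σ _ => ?_
      rw [PhiOp_pow]
      push_cast
      ring
    have hR : ∑ π : Equiv.Perm (Fin n),
          (2:Polynomial ℤ) ^ (n - lrminCount ⇑π)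
            * ((1 + 2*(ascCount ⇑π : Polynomial ℤ)) * X ^ ascCount ⇑π
              + 2*((n:Polynomial ℤ) - (ascCount ⇑π : Polynomial ℤ)) * X ^ (ascCount ⇑π + 1))
        = PhiOp n (∑ π : Equiv.Perm (Fin n),
            (X : Polynomial ℤ) ^ ascCount ⇑π * 2 ^ (n - lrminCount ⇑π)) := by
      rw [PhiOp_sum]
      refine Finset.sum_congr rfl fun π _ => ?_
      rw [PhiOp_mul_const, PhiOp_pow]
      ring
    rw [hL, hR, IH]

end Main


/-- identity in ℤ[x]. -/
theorem stmt_11 (n : ℕ) (hn : 1 ≤ n) :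
    ∑ σ ∈ stirlingFinset n, (Polynomial.X : Polynomial ℤ) ^ apCount σ
      = ∑ π : Equiv.Perm (Fin n),
          (Polynomial.X : Polynomial ℤ) ^ ascCount ⇑π * 2 ^ (n - lrminCount ⇑π) :=
  main_identity n
end

section
/- For every integer n ≥ 1, the polynomial Σ_{π ∈ S_n} x^{asc(π)+1} y^{desrlmin(π)} is symmetric in the variables x and y; equivalently, for all nonnegative integers a and b, the number of permutations π ∈ S_n with asc(π)+1 = a and desrlmin(π) = b equals the number with asc(π)+1 = b and desrlmin(π) = a. -/
open Finset

section Sym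

open Finset Function

variable {n : ℕ} {α : Type*} [LinearOrder α]

/-- right-to-left minimum positions -/
def Rset (f : Fin n → α) : Finset (Fin n) :=
  univ.filter fun i => ∀ j, i < j → f i < f j

lemma mem_Rset {f : Fin n → α} {i : Fin n} :
    i ∈ Rset f ↔ ∀ j, i < j → f i < f j := by simp [Rset]

lemma last_mem_Rfilter (f : Fin n → α) (i : Fin n) :
    (⟨n - 1, by have := i.isLt; omega⟩ : Fin n) ∈ (Rset f).filter fun k => i ≤ k := by
  have hi := i.isLt
  refine mem_filter.2 ⟨mem_Rset.2 fun j hj => absurd hj ?_, ?_⟩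
  · have := j.isLt
    simp only [Fin.lt_def] at *
    omega
  · simp only [Fin.le_def]
    omega

/-- block end: least rlmin position ≥ i -/
def Ee (f : Fin n → α) (i : Fin n) : Fin n :=
  ((Rset f).filter fun k => i ≤ k).min' ⟨_, last_mem_Rfilter f i⟩

lemma Ee_mem (f : Fin n → α) (i : Fin n) : Ee f i ∈ Rset f :=
  (mem_filter.1 (min'_mem _ _)).1

lemma le_Ee (f : Fin n → α) (i : Fin n) : i ≤ Ee f i :=
  (mem_filter.1 (min'_mem _ _)).2

lemma Ee_le {f : Fin n → α} {i k : Fin n} (hk : k ∈ Rset f) (h : i ≤ k) : Ee f i ≤ k :=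
  min'_le _ _ (mem_filter.2 ⟨hk, h⟩)

lemma Ee_mono {f : Fin n → α} {i j : Fin n} (h : i ≤ j) : Ee f i ≤ Ee f j :=
  Ee_le (Ee_mem f j) (h.trans (le_Ee f j))

lemma Ee_fiber {f : Fin n → α} {i k : Fin n} (h1 : i ≤ k) (h2 : k ≤ Ee f i) :
    Ee f k = Ee f i :=
  le_antisymm (Ee_le (Ee_mem f i) h2) (Ee_mono h1)

lemma Ee_idem (f : Fin n → α) (i : Fin n) : Ee f (Ee f i) = Ee f i :=
  Ee_fiber (le_Ee f i) le_rfl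

lemma mem_Rset_iff_Ee {f : Fin n → α} {i : Fin n} : i ∈ Rset f ↔ Ee f i = i :=
  ⟨fun h => le_antisymm (Ee_le h le_rfl) (le_Ee f i),
   fun h => h ▸ Ee_mem f i⟩

/-- the block end is the strict minimum of everything from i up to it -/
lemma blockmin {f : Fin n → α} (hf : Function.Injective f) {i k : Fin n}
    (h1 : i ≤ k) (h2 : k < Ee f i) : f (Ee f i) < f k := by
  obtain ⟨m, hm, hmin⟩ := Finset.exists_min_image (Finset.Icc k (Ee f i)) f
    ⟨k, by simp [h2.le]⟩
  have hmIcc := Finset.mem_Icc.1 hm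
  have hmR : m ∈ Rset f := by
    refine mem_Rset.2 fun j hj => ?_
    rcases le_or_gt j (Ee f i) with hle | hgt
    · have hjI : j ∈ Finset.Icc k (Ee f i) := Finset.mem_Icc.2 ⟨hmIcc.1.trans hj.le, hle⟩
      exact lt_of_le_of_ne (hmin j hjI) fun he => (ne_of_lt hj) (hf he)
    · exact lt_of_le_of_lt (hmin _ (Finset.mem_Icc.2 ⟨h2.le, le_rfl⟩))
        (mem_Rset.1 (Ee_mem f i) j hgt)
  have : Ee f i ≤ m := Ee_le hmR (h1.trans hmIcc.1)
  have hme : m = Ee f i := le_antisymm hmIcc.2 this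
  have := hmin k (Finset.mem_Icc.2 ⟨le_rfl, h2.le⟩)
  rw [hme] at this
  exact lt_of_le_of_ne this fun he => (ne_of_lt h2) (hf he).symm

/-- block start: least position in the same Ee-fiber -/
def Ss (f : Fin n → α) (i : Fin n) : Fin n :=
  (univ.filter fun j => Ee f j = Ee f i).min' ⟨i, by simp⟩

lemma Ss_le (f : Fin n → α) (i : Fin n) : Ss f i ≤ i := by
  have h := Finset.min'_le (univ.filter fun j => Ee f j = Ee f i) i (by simp)
  exact h

lemma Ee_Ss (f : Fin n → α) (i : Fin n) : Ee f (Ss f i) = Ee f i := by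
  have h := Finset.min'_mem (univ.filter fun j => Ee f j = Ee f i) ⟨i, by simp⟩
  rw [Finset.mem_filter] at h
  exact h.2

lemma Ss_min {f : Fin n → α} {i j : Fin n} (h : Ee f j = Ee f i) : Ss f i ≤ j := by
  have h2 := Finset.min'_le (univ.filter fun k => Ee f k = Ee f i) j (by simp [h])
  exact h2

lemma Ss_fiber {f : Fin n → α} {i k : Fin n} (h : Ee f k = Ee f i) : Ss f k = Ss f i := by
  refine le_antisymm (Ss_min ?_) (Ss_min ?_)
  · rw [Ee_Ss, h]
  · rw [Ee_Ss, h]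

/-- reverse the interior of the block -/
def rho (f : Fin n → α) (i : Fin n) : Fin n :=
  if h : i = Ee f i then i
  else ⟨(Ss f i).val + (Ee f i).val - 1 - i.val, by
    have h1 : i.val ≤ (Ee f i).val := le_Ee f i
    have h2 : (Ss f i).val ≤ i.val := Ss_le f i
    have h3 := (Ee f i).isLt
    have h4 : i.val ≠ (Ee f i).val := fun he => h (Fin.ext he)
    omega⟩

lemma rho_of_Ee {f : Fin n → α} {i : Fin n} (h : i = Ee f i) : rho f i = i :=
  dif_pos h

lemma rho_val {f : Fin n → α} {i : Fin n} (h : i ≠ Ee f i) :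
    (rho f i).val = (Ss f i).val + (Ee f i).val - 1 - i.val := by
  rw [rho, dif_neg h]

lemma rho_bounds (f : Fin n → α) (i : Fin n) :
    (Ss f i).val ≤ (rho f i).val ∧ (rho f i).val ≤ (Ee f i).val := by
  by_cases h : i = Ee f i
  · rw [rho_of_Ee h]
    exact ⟨Ss_le f i, le_Ee f i⟩
  · rw [rho_val h]
    have h1 : i.val ≤ (Ee f i).val := le_Ee f i
    have h2 : (Ss f i).val ≤ i.val := Ss_le f i
    have h4 : i.val ≠ (Ee f i).val := fun he => h (Fin.ext he)
    omega

lemma Ee_rho (f : Fin n → α) (i : Fin n) : Ee f (rho f i) = Ee f i := by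
  have hb := rho_bounds f i
  have := Ee_Ss f i
  calc Ee f (rho f i) = Ee f (Ss f i) := Ee_fiber (Fin.le_def.2 hb.1)
        (by rw [this]; exact Fin.le_def.2 hb.2)
    _ = Ee f i := this

lemma Ss_rho (f : Fin n → α) (i : Fin n) : Ss f (rho f i) = Ss f i :=
  Ss_fiber (Ee_rho f i)

lemma rho_invol (f : Fin n → α) : Function.Involutive (rho f) := by
  intro i
  by_cases h : i = Ee f i
  · rw [rho_of_Ee h, rho_of_Ee h]
  · have h1 : i.val ≤ (Ee f i).val := le_Ee f i
    have h2 : (Ss f i).val ≤ i.val := Ss_le f i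
    have h4 : i.val ≠ (Ee f i).val := fun he => h (Fin.ext he)
    have hv := rho_val h
    have h5 : rho f i ≠ Ee f (rho f i) := by
      rw [Ee_rho]
      intro he
      have := congrArg Fin.val he
      omega
    apply Fin.ext
    rw [rho_val h5, Ss_rho, Ee_rho, hv]
    omega

lemma rho_of_mem_Rset {f : Fin n → α} {i : Fin n} (h : i ∈ Rset f) : rho f i = i :=
  rho_of_Ee (mem_Rset_iff_Ee.1 h).symm

lemma Rset_comp_rho {f : Fin n → α} (hf : Function.Injective f) :
    Rset (f ∘ rho f) = Rset f := by
  ext i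
  simp only [mem_Rset, Function.comp_apply]
  constructor
  · intro h
    by_contra hR
    have hR' : i ∉ Rset f := fun hm => hR (mem_Rset.1 hm)
    have hEne : Ee f i ≠ i := fun he => hR' (mem_Rset_iff_Ee.2 he)
    have hlt : i < Ee f i := lt_of_le_of_ne (le_Ee f i) (Ne.symm hEne)
    have hrE : rho f (Ee f i) = Ee f i := rho_of_Ee (Ee_idem f i).symm
    have hb := rho_bounds f i
    have hblock : f (Ee f i) < f (rho f i) := by
      have hine : i ≠ Ee f i := Ne.symm hEne
      have hv := rho_val hine
      have h1v : i.val ≤ (Ee f i).val := le_Ee f i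
      have h2v : (Ss f i).val ≤ i.val := Ss_le f i
      have hvne : i.val ≠ (Ee f i).val := fun hh => hine (Fin.ext hh)
      have h2 : rho f i < Ee f (Ss f i) := by
        rw [Ee_Ss, Fin.lt_def, hv]
        omega
      have := blockmin hf (Fin.le_def.2 hb.1) h2
      rwa [Ee_Ss] at this
    have := h (Ee f i) hlt
    rw [hrE] at this
    exact absurd this (not_lt_of_gt hblock)
  · intro h j hj
    have hiE : Ee f i = i := mem_Rset_iff_Ee.1 (mem_Rset.2 h)
    rw [rho_of_Ee hiE.symm]
    have hij : i < Ss f j := by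
      by_contra hc
      push_neg at hc
      have h1 : Ss f j ≤ i := hc
      have h2 : i ≤ Ee f (Ss f j) := by
        rw [Ee_Ss]
        exact (le_of_lt hj).trans (le_Ee f j)
      have h3 : Ee f i = Ee f (Ss f j) := Ee_fiber h1 h2
      rw [Ee_Ss] at h3
      have : j ≤ i := by
        rw [hiE] at h3
        calc j ≤ Ee f j := le_Ee f j
          _ = i := h3.symm
      exact absurd hj (not_lt_of_ge this)
    have : i < rho f j := lt_of_lt_of_le hij (Fin.le_def.2 (rho_bounds f j).1)
    exact h (rho f j) this

lemma Ee_congr {f g : Fin n → α} (h : Rset f = Rset g) (i : Fin n) :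
    Ee f i = Ee g i := by
  refine le_antisymm (Ee_le ?_ (le_Ee g i)) (Ee_le ?_ (le_Ee f i))
  · rw [h]; exact Ee_mem g i
  · rw [← h]; exact Ee_mem f i

lemma Ss_congr {f g : Fin n → α} (h : Rset f = Rset g) (i : Fin n) :
    Ss f i = Ss g i := by
  refine le_antisymm (Ss_min ?_) (Ss_min ?_)
  · rw [Ee_congr h, Ee_congr h, Ee_Ss]
  · rw [← Ee_congr h, ← Ee_congr h, Ee_Ss]

lemma rho_congr {f g : Fin n → α} (h : Rset f = Rset g) : rho f = rho g := by
  funext i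
  by_cases hc : i = Ee f i
  · rw [rho_of_Ee hc, rho_of_Ee (by rw [← Ee_congr h]; exact hc)]
  · have hc' : i ≠ Ee g i := by rw [← Ee_congr h]; exact hc
    apply Fin.ext
    rw [rho_val hc, rho_val hc', Ee_congr h, Ss_congr h]

/-- descent positions that are not rlmin positions -/
def Dset (f : Fin n → α) : Finset (Fin n) :=
  univ.filter fun i => (∃ j : Fin n, (j : ℕ) + 1 = (i : ℕ) ∧ f i < f j) ∧ i ∉ Rset f

/-- ascent positions whose predecessor is not an rlmin position -/
def Aset (f : Fin n → α) : Finset (Fin n) :=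
  univ.filter fun i => ∃ j : Fin n, (j : ℕ) + 1 = (i : ℕ) ∧ f j < f i ∧ j ∉ Rset f

lemma desrlmin_split (f : Fin n → α) :
    desrlminCount f = (Rset f).card + (Dset f).card := by
  unfold desrlminCount
  have hset : (univ.filter fun i : Fin n =>
      (∃ j : Fin n, (j : ℕ) + 1 = (i : ℕ) ∧ f i < f j) ∨ ∀ j, i < j → f i < f j)
      = Rset f ∪ Dset f := by
    ext i
    simp only [mem_filter, mem_univ, true_and, mem_union, Dset, mem_Rset]
    constructor
    · intro h
      by_cases hR : ∀ j, i < j → f i < f j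
      · exact Or.inl hR
      · rcases h with h | h
        · exact Or.inr ⟨h, hR⟩
        · exact absurd h hR
    · rintro (h | ⟨h, _⟩)
      · exact Or.inr h
      · exact Or.inl h
  rw [hset, card_union_of_disjoint]
  rw [Finset.disjoint_left]
  intro i hiR hiD
  simp only [Dset, mem_filter] at hiD
  exact hiD.2.2 hiR

def lastF (hn : 0 < n) : Fin n := ⟨n - 1, by omega⟩

lemma lastF_mem_Rset (hn : 0 < n) (f : Fin n → α) : lastF hn ∈ Rset f := by
  refine mem_Rset.2 fun j hj => absurd hj ?_
  have := j.isLt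
  simp only [Fin.lt_def, lastF] at *
  omega

lemma asc_split (hn : 0 < n) (f : Fin n → α) :
    ascCount f + 1 = (Rset f).card + (Aset f).card := by
  classical
  set Bset : Finset (Fin n) :=
    univ.filter fun i => ∃ j : Fin n, (j : ℕ) + 1 = (i : ℕ) ∧ f j < f i ∧ j ∈ Rset f with hB
  have hsplit : ascFilter f = Aset f ∪ Bset := by
    ext i
    simp only [ascFilter, Aset, hB, mem_filter, mem_univ, true_and, mem_union]
    constructor
    · rintro ⟨j, hj1, hj2⟩
      by_cases hjR : j ∈ Rset f
      · exact Or.inr ⟨j, hj1, hj2, hjR⟩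
      · exact Or.inl ⟨j, hj1, hj2, hjR⟩
    · rintro (⟨j, hj1, hj2, _⟩ | ⟨j, hj1, hj2, _⟩) <;> exact ⟨j, hj1, hj2⟩
  have hdisj : Disjoint (Aset f) Bset := by
    rw [Finset.disjoint_left]
    intro i hiA hiB
    simp only [Aset, hB, mem_filter, mem_univ, true_and] at hiA hiB
    obtain ⟨j1, hj1, _, hj1R⟩ := hiA
    obtain ⟨j2, hj2, _, hj2R⟩ := hiB
    have : j1 = j2 := Fin.ext (by omega)
    exact hj1R (this ▸ hj2R)
  have hBcard : Bset.card + 1 = (Rset f).card := by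
    have hcard : Bset.card = ((Rset f).erase (lastF hn)).card := by
      refine Finset.card_nbij' (fun i => ⟨(i : ℕ) - 1, by have := i.isLt; omega⟩)
        (fun j => if h : (j : ℕ) + 1 < n then ⟨(j : ℕ) + 1, h⟩ else j) ?_ ?_ ?_ ?_
      · intro i hi
        simp only [hB, mem_coe, mem_filter, mem_univ, true_and] at hi
        obtain ⟨j, hj1, hj2, hjR⟩ := hi
        dsimp only
        have hje : j = ⟨(i : ℕ) - 1, by have := i.isLt; omega⟩ := Fin.ext (by simp; omega)
        refine Finset.mem_erase.2 ⟨?_, hje ▸ hjR⟩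
        rw [← hje]
        intro he
        have hv := congrArg Fin.val he
        simp only [lastF] at hv
        have := i.isLt
        omega
      · intro j hj
        obtain ⟨hjne, hjR⟩ := Finset.mem_erase.1 hj
        have hjlt : (j : ℕ) + 1 < n := by
          have := j.isLt
          rcases Nat.lt_or_ge ((j : ℕ) + 1) n with h | h
          · exact h
          · exact absurd (Fin.ext (by simp [lastF]; omega)) hjne
        dsimp only
        rw [dif_pos hjlt]
        simp only [hB, mem_coe, mem_filter, mem_univ, true_and]
        exact ⟨j, by simp, mem_Rset.1 hjR _ (by simp [Fin.lt_def]), hjR⟩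
      · intro i hi
        simp only [hB, mem_coe, mem_filter, mem_univ, true_and] at hi
        obtain ⟨j, hj1, _, _⟩ := hi
        have hlt : (i : ℕ) - 1 + 1 < n := by have := i.isLt; omega
        dsimp only
        rw [dif_pos hlt]
        exact Fin.ext (by simp; omega)
      · intro j hj
        obtain ⟨hjne, _⟩ := Finset.mem_erase.1 hj
        have hjlt : (j : ℕ) + 1 < n := by
          have := j.isLt
          rcases Nat.lt_or_ge ((j : ℕ) + 1) n with h | h
          · exact h
          · exact absurd (Fin.ext (by simp [lastF]; omega)) hjne
        dsimp only
        rw [dif_pos hjlt]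
        exact Fin.ext (by simp)
    rw [hcard, Finset.card_erase_of_mem (lastF_mem_Rset hn f)]
    have : 0 < (Rset f).card := Finset.card_pos.2 ⟨lastF hn, lastF_mem_Rset hn f⟩
    omega
  unfold ascCount
  rw [hsplit, card_union_of_disjoint hdisj]
  omega

/-- successor of the reflected position -/
def gm (f : Fin n → α) (i : Fin n) : Fin n :=
  if h : (rho f i).val + 1 < n then ⟨(rho f i).val + 1, h⟩ else i

lemma gm_congr {f g : Fin n → α} (h : Rset f = Rset g) : gm f = gm g := by
  funext i
  unfold gm
  rw [rho_congr h]

lemma not_mem_Rset_of_ne_Ee {f : Fin n → α} {i : Fin n} (h : (i : ℕ) ≠ (Ee f i : ℕ)) :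
    i ∉ Rset f := fun hm => h (congrArg Fin.val (mem_Rset_iff_Ee.1 hm).symm)

lemma interior_facts {f : Fin n → α} {i j : Fin n} (hj1 : (j : ℕ) + 1 = (i : ℕ))
    (hiE : i ≠ Ee f i) (hjR : j ∉ Rset f) :
    Ee f i = Ee f j ∧ (Ss f i).val < i.val := by
  have hjE : Ee f j ≠ j := fun he => hjR (mem_Rset_iff_Ee.2 he)
  have hj2 : (j : ℕ) < (Ee f j : ℕ) :=
    lt_of_le_of_ne (le_Ee f j) fun he => hjE (Fin.ext he.symm)
  have hiEj : i ≤ Ee f j := Fin.le_def.2 (by omega)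
  have hE : Ee f i = Ee f j := Ee_fiber (Fin.le_def.2 (by omega : (j : ℕ) ≤ (i : ℕ))) hiEj
  have hS : Ss f i = Ss f j := Ss_fiber hE
  have : (Ss f j : ℕ) ≤ (j : ℕ) := Ss_le f j
  exact ⟨hE, by rw [hS]; omega⟩

lemma rho_succ_lt {f : Fin n → α} {i : Fin n} (hiE : i ≠ Ee f i)
    (hS : (Ss f i).val < i.val) : (rho f i).val + 1 < n := by
  have hrv := rho_val hiE
  have hev : (i : ℕ) ≤ (Ee f i : ℕ) := le_Ee f i
  have hne : (i : ℕ) ≠ (Ee f i : ℕ) := fun he => hiE (Fin.ext he)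
  have := (Ee f i).isLt
  omega

lemma succ_props {f : Fin n → α} {i : Fin n} (hiE : i ≠ Ee f i)
    (hS : (Ss f i).val < i.val) (h1n : (rho f i).val + 1 < n) :
    Ee f (⟨(rho f i).val + 1, h1n⟩ : Fin n) = Ee f i ∧
      (⟨(rho f i).val + 1, h1n⟩ : Fin n) ≠ Ee f (⟨(rho f i).val + 1, h1n⟩ : Fin n) ∧
      (rho f (⟨(rho f i).val + 1, h1n⟩ : Fin n)).val = i.val - 1 ∧
      (Ss f (⟨(rho f i).val + 1, h1n⟩ : Fin n)).val = (Ss f i).val := by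
  set i' : Fin n := ⟨(rho f i).val + 1, h1n⟩ with hi'
  have hrv := rho_val hiE
  have hev : (i : ℕ) ≤ (Ee f i : ℕ) := le_Ee f i
  have hne : (i : ℕ) ≠ (Ee f i : ℕ) := fun he => hiE (Fin.ext he)
  have hi'v : (i' : ℕ) = (Ss f i).val + (Ee f i).val - (i : ℕ) := by
    rw [hi']; simp only; omega
  have hS' : Ss f i ≤ i' := Fin.le_def.2 (by omega)
  have hup : (i' : ℕ) ≤ (Ee f (Ss f i) : ℕ) := by
    rw [congrArg Fin.val (Ee_Ss f i)]; omega
  have hEi' : Ee f i' = Ee f i := by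
    have := Ee_fiber hS' (Fin.le_def.2 hup)
    rwa [Ee_Ss] at this
  have hi'ne : i' ≠ Ee f i' := by
    intro he
    have hv := congrArg Fin.val he
    rw [congrArg Fin.val hEi'] at hv
    omega
  have hSi' : Ss f i' = Ss f i := Ss_fiber hEi'
  refine ⟨hEi', hi'ne, ?_, congrArg Fin.val hSi'⟩
  rw [rho_val hi'ne, congrArg Fin.val hSi', congrArg Fin.val hEi']
  omega

lemma gm_gm {f : Fin n → α} {i : Fin n} (hiE : i ≠ Ee f i)
    (hS : (Ss f i).val < i.val) : gm f (gm f i) = i := by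
  have h1n := rho_succ_lt hiE hS
  have hgm : gm f i = ⟨(rho f i).val + 1, h1n⟩ := by rw [gm, dif_pos h1n]
  obtain ⟨hE', hne', hr', hS'⟩ := succ_props hiE hS h1n
  rw [hgm]
  have hrv := rho_val hiE
  have hev : (i : ℕ) ≤ (Ee f i : ℕ) := le_Ee f i
  have h2n : (rho f (⟨(rho f i).val + 1, h1n⟩ : Fin n)).val + 1 < n := by
    have := i.isLt; omega
  rw [gm, dif_pos h2n]
  exact Fin.ext (by simp only; omega)

lemma F1 {f : Fin n → α} (hf : Function.Injective f) {i : Fin n} (hi : i ∈ Dset f) :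
    gm f i ∈ Aset (f ∘ rho f) := by
  simp only [Dset, mem_filter, mem_univ, true_and] at hi
  obtain ⟨⟨j, hj1, hdesc⟩, hiR⟩ := hi
  have hiE : i ≠ Ee f i := fun he =>
    hiR (mem_Rset_iff_Ee.2 he.symm)
  have hjR : j ∉ Rset f := fun h =>
    absurd (mem_Rset.1 h i (Fin.lt_def.2 (by omega))) (not_lt_of_gt hdesc)
  obtain ⟨hEij, hS⟩ := interior_facts hj1 hiE hjR
  have h1n := rho_succ_lt hiE hS
  have hgm : gm f i = ⟨(rho f i).val + 1, h1n⟩ := by rw [gm, dif_pos h1n]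
  obtain ⟨hE', hne', hr', hS'⟩ := succ_props hiE hS h1n
  rw [hgm]
  simp only [Aset, mem_filter, mem_univ, true_and]
  refine ⟨rho f i, rfl, ?_, ?_⟩
  · have h1 : (f ∘ rho f) (rho f i) = f i := by
      simp only [Function.comp_apply, rho_invol f i]
    have h2 : (f ∘ rho f) (⟨(rho f i).val + 1, h1n⟩ : Fin n) = f j := by
      simp only [Function.comp_apply]
      congr 1
      exact Fin.ext (by omega)
    rw [h1, h2]
    exact hdesc
  · rw [Rset_comp_rho hf]
    refine not_mem_Rset_of_ne_Ee ?_
    rw [congrArg Fin.val (Ee_rho f i), rho_val hiE]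
    have hev : (i : ℕ) ≤ (Ee f i : ℕ) := le_Ee f i
    have hne : (i : ℕ) ≠ (Ee f i : ℕ) := fun he => hiE (Fin.ext he)
    omega

lemma G1 {f : Fin n → α} (hf : Function.Injective f) {i : Fin n} (hi : i ∈ Aset f) :
    gm f i ∈ Dset (f ∘ rho f) := by
  simp only [Aset, mem_filter, mem_univ, true_and] at hi
  obtain ⟨j, hj1, hasc, hjR⟩ := hi
  have hjE : Ee f j ≠ j := fun he => hjR (mem_Rset_iff_Ee.2 he)
  have hj2 : (j : ℕ) < (Ee f j : ℕ) :=
    lt_of_le_of_ne (le_Ee f j) fun he => hjE (Fin.ext he.symm)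
  have hiE : i ≠ Ee f i := by
    intro he
    have hb := blockmin hf (le_refl j) (Fin.lt_def.2 hj2)
    have hEji : Ee f j = i := by
      have h1 : Ee f i = Ee f j :=
        Ee_fiber (Fin.le_def.2 (by omega : (j : ℕ) ≤ (i : ℕ))) (Fin.le_def.2 (by omega))
      rw [← h1, ← he]
    rw [hEji] at hb
    exact absurd hasc (not_lt_of_gt hb)
  obtain ⟨hEij, hS⟩ := interior_facts hj1 hiE hjR
  have h1n := rho_succ_lt hiE hS
  have hgm : gm f i = ⟨(rho f i).val + 1, h1n⟩ := by rw [gm, dif_pos h1n]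
  obtain ⟨hE', hne', hr', hS'⟩ := succ_props hiE hS h1n
  rw [hgm]
  simp only [Dset, mem_filter, mem_univ, true_and]
  refine ⟨⟨rho f i, rfl, ?_⟩, ?_⟩
  · have h1 : (f ∘ rho f) (rho f i) = f i := by
      simp only [Function.comp_apply, rho_invol f i]
    have h2 : (f ∘ rho f) (⟨(rho f i).val + 1, h1n⟩ : Fin n) = f j := by
      simp only [Function.comp_apply]
      congr 1
      exact Fin.ext (by omega)
    rw [h1, h2]
    exact hasc
  · rw [Rset_comp_rho hf]
    refine not_mem_Rset_of_ne_Ee ?_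
    rw [congrArg Fin.val hE']
    have hev : (i : ℕ) ≤ (Ee f i : ℕ) := le_Ee f i
    have hne : (i : ℕ) ≠ (Ee f i : ℕ) := fun he => hiE (Fin.ext he)
    have hrv := rho_val hiE
    simp only
    omega

lemma mem_Dset_props {f : Fin n → α} {i : Fin n} (hi : i ∈ Dset f) :
    i ≠ Ee f i ∧ (Ss f i).val < i.val := by
  simp only [Dset, mem_filter, mem_univ, true_and] at hi
  obtain ⟨⟨j, hj1, hdesc⟩, hiR⟩ := hi
  have hiE : i ≠ Ee f i := fun he => hiR (mem_Rset_iff_Ee.2 he.symm)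
  have hjR : j ∉ Rset f := fun h =>
    absurd (mem_Rset.1 h i (Fin.lt_def.2 (by omega))) (not_lt_of_gt hdesc)
  exact ⟨hiE, (interior_facts hj1 hiE hjR).2⟩

lemma mem_Aset_props {f : Fin n → α} (hf : Function.Injective f) {i : Fin n}
    (hi : i ∈ Aset f) : i ≠ Ee f i ∧ (Ss f i).val < i.val := by
  simp only [Aset, mem_filter, mem_univ, true_and] at hi
  obtain ⟨j, hj1, hasc, hjR⟩ := hi
  have hjE : Ee f j ≠ j := fun he => hjR (mem_Rset_iff_Ee.2 he)
  have hj2 : (j : ℕ) < (Ee f j : ℕ) :=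
    lt_of_le_of_ne (le_Ee f j) fun he => hjE (Fin.ext he.symm)
  have hiE : i ≠ Ee f i := by
    intro he
    have hb := blockmin hf (le_refl j) (Fin.lt_def.2 hj2)
    have hEji : Ee f j = i := by
      have h1 : Ee f i = Ee f j :=
        Ee_fiber (Fin.le_def.2 (by omega : (j : ℕ) ≤ (i : ℕ))) (Fin.le_def.2 (by omega))
      rw [← h1, ← he]
    rw [hEji] at hb
    exact absurd hasc (not_lt_of_gt hb)
  exact ⟨hiE, (interior_facts hj1 hiE hjR).2⟩

/-- the involution on permutations: reverse the interior of every rlmin block -/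
def phiP (π : Equiv.Perm (Fin n)) : Equiv.Perm (Fin n) :=
  π * Function.Involutive.toPerm (rho ⇑π) (rho_invol ⇑π)

lemma phiP_coe (π : Equiv.Perm (Fin n)) : ⇑(phiP π) = ⇑π ∘ rho ⇑π := rfl

lemma Rset_phiP (π : Equiv.Perm (Fin n)) : Rset ⇑(phiP π) = Rset ⇑π := by
  rw [phiP_coe]
  exact Rset_comp_rho π.injective

lemma phiP_phiP (π : Equiv.Perm (Fin n)) : phiP (phiP π) = π := by
  apply Equiv.ext
  intro x
  have h := congrFun (rho_congr (Rset_phiP π)) x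
  show (⇑(phiP π) ∘ rho ⇑(phiP π)) x = π x
  simp only [Function.comp_apply] at *
  rw [h]
  show (⇑π ∘ rho ⇑π) (rho ⇑π x) = π x
  simp only [Function.comp_apply, rho_invol ⇑π x]

lemma card_D_A (π : Equiv.Perm (Fin n)) :
    (Dset ⇑π).card = (Aset ⇑(phiP π)).card := by
  refine Finset.card_nbij' (gm ⇑π) (gm ⇑π) ?_ ?_ ?_ ?_
  · intro i hi
    have := F1 π.injective hi
    rwa [← phiP_coe] at this
  · intro i hi
    have := G1 (phiP π).injective hi
    rw [← phiP_coe (phiP π), phiP_phiP] at this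
    rwa [gm_congr (Rset_phiP π)] at this
  · intro i hi
    obtain ⟨hiE, hS⟩ := mem_Dset_props hi
    exact gm_gm hiE hS
  · intro i hi
    obtain ⟨hiE, hS⟩ := mem_Aset_props (phiP π).injective hi
    rw [← gm_congr (Rset_phiP π)]
    exact gm_gm hiE hS

lemma key1 {n : ℕ} (hn : 0 < n) (π : Equiv.Perm (Fin n)) :
    ascCount ⇑(phiP π) + 1 = desrlminCount ⇑π := by
  rw [asc_split hn, desrlmin_split, Rset_phiP, card_D_A]

lemma key2 {n : ℕ} (hn : 0 < n) (π : Equiv.Perm (Fin n)) :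
    desrlminCount ⇑(phiP π) = ascCount ⇑π + 1 := by
  rw [desrlmin_split, asc_split hn, Rset_phiP]
  congr 1
  have h := card_D_A (phiP π)
  rw [phiP_phiP] at h
  exact h

end Sym

/-- symmetry of Σ_{π ∈ S_n} x^{asc(π)+1} y^{desrlmin(π)} in x and y
(variables: X 0 = x, X 1 = y), together with the equivalent counting formulation. -/
theorem stmt_14 (n : ℕ) (hn : 1 ≤ n) :
    (∑ π : Equiv.Perm (Fin n),
          (MvPolynomial.X 0 : MvPolynomial (Fin 2) ℤ) ^ (ascCount ⇑π + 1) *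
            MvPolynomial.X 1 ^ desrlminCount ⇑π
        = ∑ π : Equiv.Perm (Fin n),
            (MvPolynomial.X 1 : MvPolynomial (Fin 2) ℤ) ^ (ascCount ⇑π + 1) *
              MvPolynomial.X 0 ^ desrlminCount ⇑π) ∧
      ∀ a b : ℕ,
        (univ.filter fun π : Equiv.Perm (Fin n) =>
            ascCount ⇑π + 1 = a ∧ desrlminCount ⇑π = b).card
          = (univ.filter fun π : Equiv.Perm (Fin n) =>
              ascCount ⇑π + 1 = b ∧ desrlminCount ⇑π = a).card := by
  have hn0 : 0 < n := hn
  have hinv : Function.Involutive (phiP (n := n)) := phiP_phiP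
  constructor
  · rw [← Equiv.sum_comp (Function.Involutive.toPerm _ hinv)
      (fun σ : Equiv.Perm (Fin n) =>
        (MvPolynomial.X 0 : MvPolynomial (Fin 2) ℤ) ^ (ascCount ⇑σ + 1) *
          MvPolynomial.X 1 ^ desrlminCount ⇑σ)]
    apply Finset.sum_congr rfl
    intro π _
    show (MvPolynomial.X 0 : MvPolynomial (Fin 2) ℤ) ^ (ascCount ⇑(phiP π) + 1) *
        MvPolynomial.X 1 ^ desrlminCount ⇑(phiP π)
      = (MvPolynomial.X 1 : MvPolynomial (Fin 2) ℤ) ^ (ascCount ⇑π + 1) *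
        MvPolynomial.X 0 ^ desrlminCount ⇑π
    rw [key1 hn0, key2 hn0]
    ring
  · intro a b
    refine Finset.card_nbij' phiP phiP ?_ ?_ ?_ ?_
    · intro π hπ
      obtain ⟨-, h1, h2⟩ := Finset.mem_filter.1 hπ
      exact Finset.mem_filter.2 ⟨Finset.mem_univ _,
        by rw [key1 hn0]; exact h2, by rw [key2 hn0]; exact h1⟩
    · intro π hπ
      obtain ⟨-, h1, h2⟩ := Finset.mem_filter.1 hπ
      exact Finset.mem_filter.2 ⟨Finset.mem_univ _,
        by rw [key1 hn0]; exact h2, by rw [key2 hn0]; exact h1⟩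
    · intro π _
      exact phiP_phiP π
    · intro π _
      exact phiP_phiP π
end

section
/- For every integer n ≥ 1 and every positive integer q, the following identity holds in ℤ[x]: Σ_{π ∈ S_n} q^{lrmin(π)} x^{asc(π)} = Σ over all q-tuples (n₁,…,n_q) of nonnegative integers with n₁+⋯+n_q = n of the multinomial coefficient n!/(n₁!⋯n_q!) times the product A_{n₁}(x)⋯A_{n_q}(x), where A_m(x) = Σ_{π ∈ S_m} x^{asc(π)} is the m-th Eulerian polynomial and A_0(x) = 1. -/
open Finset

/-- The m-th Eulerian polynomial A_m(x) = Σ_{π ∈ S_m} x^{asc(π)} (with A_0 = 1). -/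
noncomputable def eulerianPoly (m : ℕ) : Polynomial ℤ :=
  ∑ π : Equiv.Perm (Fin m), Polynomial.X ^ ascCount ⇑π

namespace Stmt16Aux

open Nat Polynomial Finset

variable {n : ℕ}

/-! ### The insertion bijection -/

def ins (σ : Equiv.Perm (Fin n)) (p : Fin (n + 1)) : Equiv.Perm (Fin (n + 1)) :=
  (finSuccEquiv' p).trans (σ.optionCongr.trans (finSuccEquiv' (Fin.last n)).symm)

@[simp] lemma ins_apply_self (σ : Equiv.Perm (Fin n)) (p : Fin (n + 1)) :
    ins σ p p = Fin.last n := by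
  simp [ins, finSuccEquiv'_at, finSuccEquiv'_symm_none]

@[simp] lemma ins_apply_succAbove (σ : Equiv.Perm (Fin n)) (p : Fin (n + 1)) (i : Fin n) :
    ins σ p (p.succAbove i) = (σ i).castSucc := by
  simp [ins, finSuccEquiv'_succAbove, finSuccEquiv'_symm_some, Fin.succAbove_last]

lemma ins_bijective :
    Function.Bijective (fun sp : Equiv.Perm (Fin n) × Fin (n + 1) => ins sp.1 sp.2) := by
  rw [Fintype.bijective_iff_injective_and_card]
  constructor
  · rintro ⟨σ, p⟩ ⟨σ', p'⟩ h
    simp only at h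
    have hp : p = p' := by
      have h1 : ins σ' p' p' = Fin.last n := ins_apply_self σ' p'
      rw [← h] at h1
      have h2 : ins σ p p = Fin.last n := ins_apply_self σ p
      exact (ins σ p).injective (h2.trans h1.symm)
    subst hp
    have hσ : σ = σ' := by
      apply Equiv.ext
      intro i
      have := congrArg (fun e : Equiv.Perm (Fin (n+1)) => e (p.succAbove i)) h
      simp only [ins_apply_succAbove] at this
      exact Fin.castSucc_injective _ this
    rw [hσ]
  · simp [Fintype.card_perm, Nat.factorial_succ, mul_comm]

/-! ### Counting helper -/

lemma card_filter_univ_succAbove (p : Fin (n + 1)) (P : Fin (n + 1) → Prop) [DecidablePred P] :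
    (univ.filter P).card
      = (if P p then 1 else 0) + (univ.filter fun i : Fin n => P (p.succAbove i)).card := by
  rw [Finset.card_filter, Finset.card_filter, Fin.sum_univ_succAbove _ p]

/-! ### Behaviour of lrmin under insertion -/

lemma lrminCount_ins (σ : Equiv.Perm (Fin n)) (p : Fin (n + 1)) :
    lrminCount ⇑(ins σ p) = (if p = 0 then 1 else 0) + lrminCount ⇑σ := by
  have h := card_filter_univ_succAbove p
    (fun i => ∀ j, j < i → (ins σ p) i < (ins σ p) j)
  have e1 : lrminCount ⇑(ins σ p)
      = (univ.filter fun i => ∀ j, j < i → (ins σ p) i < (ins σ p) j).card := rfl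
  rw [e1, h]
  congr 1
  · by_cases hp : p = 0
    · subst hp
      rw [if_pos, if_pos rfl]
      intro j hj
      exact absurd hj (Fin.not_lt_zero j)
    · rw [if_neg, if_neg hp]
      intro hP
      have h0 : (0 : Fin (n + 1)) < p := Fin.pos_of_ne_zero hp
      have := hP 0 h0
      rw [ins_apply_self] at this
      exact absurd this (not_lt.mpr (Fin.le_last _))
  · apply congrArg Finset.card
    apply Finset.filter_congr
    intro i _
    constructor
    · intro hP i' hi'
      have := hP (p.succAbove i') (by rwa [Fin.succAbove_lt_succAbove_iff])
      rw [ins_apply_succAbove, ins_apply_succAbove] at this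
      exact Fin.castSucc_lt_castSucc_iff.mp this
    · intro hσ j hj
      rcases eq_or_ne j p with rfl | hne
      · rw [ins_apply_self, ins_apply_succAbove]
        exact Fin.castSucc_lt_last _
      · obtain ⟨i', rfl⟩ := Fin.exists_succAbove_eq hne
        rw [ins_apply_succAbove, ins_apply_succAbove]
        exact Fin.castSucc_lt_castSucc_iff.mpr
          (hσ i' (Fin.succAbove_lt_succAbove_iff.mp hj))

/-! ### Behaviour of asc under insertion -/

lemma mem_ascFilter_iff {m : ℕ} {α : Type*} [LinearOrder α] {f : Fin m → α} {i : Fin m} :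
    i ∈ ascFilter f ↔ ∃ j : Fin m, (j : ℕ) + 1 = (i : ℕ) ∧ f j < f i := by
  simp [ascFilter]

lemma ne_zero_of_mem_ascFilter {m : ℕ} {α : Type*} [LinearOrder α] {f : Fin m → α} {i : Fin m}
    (h : i ∈ ascFilter f) : (i : ℕ) ≠ 0 := by
  obtain ⟨j, hj, -⟩ := mem_ascFilter_iff.mp h
  omega

lemma val_succAbove (p : Fin (n + 1)) (i : Fin n) :
    ((p.succAbove i : Fin (n + 1)) : ℕ) = if (i : ℕ) < (p : ℕ) then (i : ℕ) else (i : ℕ) + 1 := by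
  rcases lt_or_ge (Fin.castSucc i) p with h | h
  · rw [Fin.succAbove_of_castSucc_lt _ _ h, if_pos]
    · rfl
    · exact h
  · rw [Fin.succAbove_of_le_castSucc _ _ h, if_neg]
    · rfl
    · exact not_lt.mpr h

lemma ascCount_ins (σ : Equiv.Perm (Fin n)) (p : Fin (n + 1)) :
    ascCount ⇑(ins σ p) = (if p = 0 then 0 else 1)
      + ((ascFilter ⇑σ).filter fun i : Fin n => (i : ℕ) ≠ (p : ℕ)).card := by
  have h := card_filter_univ_succAbove p
    (fun i : Fin (n + 1) => ∃ j : Fin (n + 1), (j : ℕ) + 1 = (i : ℕ) ∧ (ins σ p) j < (ins σ p) i)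
  have e1 : ascCount ⇑(ins σ p)
      = (univ.filter fun i : Fin (n + 1) => ∃ j : Fin (n + 1),
          (j : ℕ) + 1 = (i : ℕ) ∧ (ins σ p) j < (ins σ p) i).card := rfl
  rw [e1, h]
  congr 1
  · by_cases hp : p = 0
    · subst hp
      rw [if_neg, if_pos rfl]
      rintro ⟨j, hj, -⟩
      simp at hj
    · rw [if_pos, if_neg hp]
      have hpv : (p : ℕ) ≠ 0 := fun hc => hp (Fin.ext hc)
      refine ⟨⟨(p : ℕ) - 1, by omega⟩, by simp; omega, ?_⟩
      have hne : (⟨(p : ℕ) - 1, by omega⟩ : Fin (n + 1)) ≠ p := by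
        intro hc
        have := congrArg Fin.val hc
        simp at this
        omega
      obtain ⟨i', hi'⟩ := Fin.exists_succAbove_eq hne
      rw [← hi', ins_apply_succAbove, ins_apply_self]
      exact Fin.castSucc_lt_last _
  · apply congrArg Finset.card
    rw [show (ascFilter ⇑σ) = univ.filter
      (fun i : Fin n => ∃ j : Fin n, (j : ℕ) + 1 = (i : ℕ) ∧ σ j < σ i) from rfl]
    rw [Finset.filter_filter]
    apply Finset.filter_congr
    intro i _
    constructor
    · rintro ⟨j, hjval, hjlt⟩
      have hjne : j ≠ p := by
        intro hc
        subst hc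
        rw [ins_apply_self] at hjlt
        exact absurd hjlt (not_lt.mpr (Fin.le_last _))
      obtain ⟨i₀, rfl⟩ := Fin.exists_succAbove_eq hjne
      rw [ins_apply_succAbove, ins_apply_succAbove] at hjlt
      have hlt : σ i₀ < σ i := Fin.castSucc_lt_castSucc_iff.mp hjlt
      have hv₀ := val_succAbove p i₀
      have hv := val_succAbove p i
      constructor
      · refine ⟨i₀, ?_, hlt⟩
        by_cases h1 : (i₀ : ℕ) < (p : ℕ) <;> by_cases h2 : (i : ℕ) < (p : ℕ) <;>
          simp [h1, h2] at hv₀ hv <;> omega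
      · by_cases h1 : (i₀ : ℕ) < (p : ℕ) <;> by_cases h2 : (i : ℕ) < (p : ℕ) <;>
          simp [h1, h2] at hv₀ hv <;> omega
    · rintro ⟨⟨i₀, hi₀, hlt⟩, hip⟩
      refine ⟨p.succAbove i₀, ?_, ?_⟩
      · rw [val_succAbove, val_succAbove]
        by_cases h1 : (i₀ : ℕ) < (p : ℕ) <;> by_cases h2 : (i : ℕ) < (p : ℕ) <;>
          simp [h1, h2] <;> omega
      · rw [ins_apply_succAbove, ins_apply_succAbove]
        exact Fin.castSucc_lt_castSucc_iff.mpr hlt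


/-! ### The generating polynomial and its recurrence -/

noncomputable def Lp (c m : ℕ) : Polynomial ℤ :=
  ∑ π : Equiv.Perm (Fin m), (c : Polynomial ℤ) ^ lrminCount ⇑π * Polynomial.X ^ ascCount ⇑π

lemma ascCount_le {m : ℕ} (f : Fin m → ℕ) : ascCount f ≤ m := by
  have : (ascFilter f).card ≤ (univ : Finset (Fin m)).card :=
    Finset.card_le_card (Finset.filter_subset _ _)
  simpa [ascCount] using this

lemma X_mul_derivative_X_pow (a : ℕ) :
    (X : Polynomial ℤ) * derivative (X ^ a : Polynomial ℤ) = (a : Polynomial ℤ) * X ^ a := by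
  cases a with
  | zero => simp
  | succ k =>
      rw [derivative_X_pow, Polynomial.C_eq_natCast, Nat.add_sub_cancel]
      ring

lemma sum_ins (c : ℕ) (σ : Equiv.Perm (Fin n)) :
    ∑ p : Fin (n + 1),
        (c : Polynomial ℤ) ^ lrminCount ⇑(ins σ p) * X ^ ascCount ⇑(ins σ p)
      = (c : Polynomial ℤ) ^ lrminCount ⇑σ *
          ((c : Polynomial ℤ) * X ^ ascCount ⇑σ
            + (ascCount ⇑σ : Polynomial ℤ) * X ^ ascCount ⇑σ
            + ((n - ascCount ⇑σ : ℕ) : Polynomial ℤ) * X ^ (ascCount ⇑σ + 1)) := by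
  have ha_le : ascCount ⇑σ ≤ n := ascCount_le _
  rw [Fin.sum_univ_succ]
  -- the term at p = 0
  have h0 : (c : Polynomial ℤ) ^ lrminCount ⇑(ins σ 0) * X ^ ascCount ⇑(ins σ 0)
      = (c : Polynomial ℤ) * ((c : Polynomial ℤ) ^ lrminCount ⇑σ * X ^ ascCount ⇑σ) := by
    rw [lrminCount_ins, ascCount_ins, if_pos rfl, if_pos rfl]
    rw [Finset.filter_true_of_mem (fun i hi => by
      have := ne_zero_of_mem_ascFilter hi
      simpa using this)]
    unfold ascCount
    rw [pow_add, pow_one]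
    ring
  -- the terms at p = i.succ
  have hterm : ∀ i : Fin n,
      (c : Polynomial ℤ) ^ lrminCount ⇑(ins σ i.succ) * X ^ ascCount ⇑(ins σ i.succ)
        = (c : Polynomial ℤ) ^ lrminCount ⇑σ *
            (if ∃ i' ∈ ascFilter ⇑σ, (i' : ℕ) = (i : ℕ) + 1 then X ^ ascCount ⇑σ
              else X ^ (ascCount ⇑σ + 1)) := by
    intro i
    rw [lrminCount_ins, ascCount_ins, if_neg (Fin.succ_ne_zero i), if_neg (Fin.succ_ne_zero i)]
    by_cases hQ : ∃ i' ∈ ascFilter ⇑σ, (i' : ℕ) = (i : ℕ) + 1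
    · obtain ⟨i', hi'mem, hi'val⟩ := hQ
      have hfil : (ascFilter ⇑σ).filter
          (fun x : Fin n => (x : ℕ) ≠ ((i.succ : Fin (n + 1)) : ℕ)) = (ascFilter ⇑σ).erase i' := by
        ext x
        simp only [Finset.mem_filter, Finset.mem_erase, Fin.val_succ]
        constructor
        · rintro ⟨hx, hxv⟩
          exact ⟨fun hc => hxv (by rw [hc, hi'val]), hx⟩
        · rintro ⟨hne, hx⟩
          refine ⟨hx, fun hc => hne (Fin.ext (by rw [hc, hi'val]))⟩
      rw [if_pos ⟨i', hi'mem, hi'val⟩, hfil, Finset.card_erase_of_mem hi'mem]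
      have hpos : 1 ≤ ascCount ⇑σ := Finset.card_pos.mpr ⟨i', hi'mem⟩
      have he : 1 + ((ascFilter ⇑σ).card - 1) = ascCount ⇑σ := by
        unfold ascCount at hpos ⊢
        omega
      rw [he, zero_add]
    · rw [if_neg hQ]
      have hfil : (ascFilter ⇑σ).filter
          (fun x : Fin n => (x : ℕ) ≠ ((i.succ : Fin (n + 1)) : ℕ)) = ascFilter ⇑σ := by
        apply Finset.filter_true_of_mem
        intro x hx hc
        exact hQ ⟨x, hx, by simpa [Fin.val_succ] using hc⟩
      rw [hfil]
      have he : 1 + (ascFilter ⇑σ).card = ascCount ⇑σ + 1 := by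
        unfold ascCount
        omega
      rw [he, zero_add]
  rw [h0, Finset.sum_congr rfl (fun i _ => hterm i)]
  rw [← Finset.mul_sum, Finset.sum_ite, Finset.sum_const, Finset.sum_const]
  have hcard1 : (univ.filter fun i : Fin n =>
      ∃ i' ∈ ascFilter ⇑σ, (i' : ℕ) = (i : ℕ) + 1).card = ascCount ⇑σ := by
    symm
    apply Finset.card_bij
      (fun (i' : Fin n) (h : i' ∈ ascFilter ⇑σ) => (⟨(i' : ℕ) - 1, by omega⟩ : Fin n))
    · intro i' h
      have h1 : (i' : ℕ) ≠ 0 := ne_zero_of_mem_ascFilter h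
      simp only [Finset.mem_filter, Finset.mem_univ, true_and]
      exact ⟨i', h, show (i' : ℕ) = ((i' : ℕ) - 1) + 1 by omega⟩
    · intro a ha b hb hab
      have h1 : (a : ℕ) ≠ 0 := ne_zero_of_mem_ascFilter ha
      have h2 : (b : ℕ) ≠ 0 := ne_zero_of_mem_ascFilter hb
      have := congrArg Fin.val hab
      simp at this
      exact Fin.ext (by omega)
    · intro b hb
      simp only [Finset.mem_filter, Finset.mem_univ, true_and] at hb
      obtain ⟨i', h, hval⟩ := hb
      exact ⟨i', h, Fin.ext (show ((i' : ℕ) - 1) = (b : ℕ) by omega)⟩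
  have hcard2 : (univ.filter fun i : Fin n =>
      ¬ ∃ i' ∈ ascFilter ⇑σ, (i' : ℕ) = (i : ℕ) + 1).card = n - ascCount ⇑σ := by
    have h := Finset.card_filter_add_card_filter_not
      (s := (univ : Finset (Fin n)))
      (p := fun i : Fin n => ∃ i' ∈ ascFilter ⇑σ, (i' : ℕ) = (i : ℕ) + 1)
    rw [Finset.card_univ, Fintype.card_fin, hcard1] at h
    omega
  rw [hcard1, hcard2, nsmul_eq_mul, nsmul_eq_mul]
  ring

lemma Lp_succ (c : ℕ) :
    Lp c (n + 1) = (c : Polynomial ℤ) * Lp c n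
      + (1 - X) * (X * derivative (Lp c n)) + (n : Polynomial ℤ) * (X * Lp c n) := by
  have hbij := Fintype.sum_bijective
    (fun sp : Equiv.Perm (Fin n) × Fin (n + 1) => ins sp.1 sp.2) ins_bijective
    (fun sp : Equiv.Perm (Fin n) × Fin (n + 1) =>
      (c : Polynomial ℤ) ^ lrminCount ⇑(ins sp.1 sp.2) * X ^ ascCount ⇑(ins sp.1 sp.2))
    (fun π : Equiv.Perm (Fin (n + 1)) =>
      (c : Polynomial ℤ) ^ lrminCount ⇑π * X ^ ascCount ⇑π)
    (fun sp => rfl)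
  rw [Lp, ← hbij, Fintype.sum_prod_type]
  rw [Finset.sum_congr rfl (fun σ _ => sum_ins c σ)]
  have hderiv : derivative (Lp c n)
      = ∑ σ : Equiv.Perm (Fin n),
          (c : Polynomial ℤ) ^ lrminCount ⇑σ * derivative (X ^ ascCount ⇑σ : Polynomial ℤ) := by
    rw [Lp, derivative_sum]
    refine Finset.sum_congr rfl (fun σ _ => ?_)
    rw [derivative_mul, ← Nat.cast_pow, derivative_natCast, Nat.cast_pow, zero_mul, zero_add]
  rw [hderiv, Lp]
  rw [Finset.mul_sum, Finset.mul_sum, Finset.mul_sum, Finset.mul_sum, Finset.mul_sum]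
  rw [← Finset.sum_add_distrib, ← Finset.sum_add_distrib]
  refine Finset.sum_congr rfl (fun σ _ => ?_)
  have ha_le : ascCount ⇑σ ≤ n := ascCount_le _
  have hX := X_mul_derivative_X_pow (ascCount ⇑σ)
  rw [Nat.cast_sub ha_le]
  calc (c : Polynomial ℤ) ^ lrminCount ⇑σ *
        ((c : Polynomial ℤ) * X ^ ascCount ⇑σ
          + (ascCount ⇑σ : Polynomial ℤ) * X ^ ascCount ⇑σ
          + ((n : Polynomial ℤ) - (ascCount ⇑σ : Polynomial ℤ)) * X ^ (ascCount ⇑σ + 1))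
      = (c : Polynomial ℤ) * ((c : Polynomial ℤ) ^ lrminCount ⇑σ * X ^ ascCount ⇑σ)
        + (1 - X) * ((c : Polynomial ℤ) ^ lrminCount ⇑σ *
            ((ascCount ⇑σ : Polynomial ℤ) * X ^ ascCount ⇑σ))
        + (n : Polynomial ℤ) * (X * ((c : Polynomial ℤ) ^ lrminCount ⇑σ * X ^ ascCount ⇑σ)) := by
        ring
    _ = _ := by rw [← hX]; ring

/-! ### Eulerian polynomials -/

lemma eulerianPoly_eq_Lp (m : ℕ) : eulerianPoly m = Lp 1 m := by
  unfold eulerianPoly Lp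
  simp

lemma eulerianPoly_zero : eulerianPoly 0 = 1 := by
  unfold eulerianPoly
  have h : ∀ π : Equiv.Perm (Fin 0), ascCount ⇑π = 0 := by
    intro π
    unfold ascCount ascFilter
    simp
  rw [Finset.sum_congr rfl (fun π _ => by rw [h π, pow_zero])]
  rw [Finset.sum_const, Finset.card_univ, Fintype.card_perm]
  simp

lemma eulerianPoly_succ (m : ℕ) :
    eulerianPoly (m + 1) = eulerianPoly m
      + (1 - X) * (X * derivative (eulerianPoly m))
      + (m : Polynomial ℤ) * (X * eulerianPoly m) := by
  rw [eulerianPoly_eq_Lp, eulerianPoly_eq_Lp, Lp_succ]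
  norm_num

/-! ### Derivative of a finite product -/

lemma derivative_finset_prod {ι : Type*} [DecidableEq ι] (s : Finset ι) (f : ι → Polynomial ℤ) :
    derivative (∏ i ∈ s, f i) = ∑ i ∈ s, derivative (f i) * ∏ j ∈ s.erase i, f j := by
  induction s using Finset.induction_on with
  | empty => simp
  | @insert a s ha ih =>
      rw [Finset.prod_insert ha, derivative_mul, ih, Finset.sum_insert ha,
        Finset.erase_insert ha, Finset.mul_sum]
      congr 1
      refine Finset.sum_congr rfl fun i hi => ?_
      have hia : i ≠ a := ne_of_mem_of_not_mem hi ha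
      rw [Finset.erase_insert_of_ne hia.symm,
        Finset.prod_insert (fun hc => ha (Finset.mem_of_mem_erase hc))]
      ring

/-! ### Multinomial recurrence -/

lemma multinomial_split {c : ℕ} (v : Fin c → ℕ) (hv : ∑ i, v i = n + 1) :
    Nat.multinomial univ v
      = ∑ j ∈ univ.filter (fun j => v j ≠ 0),
          Nat.multinomial univ (Function.update v j (v j - 1)) := by
  have hfac : 0 < ∏ i, (v i)! := Finset.prod_pos (fun i _ => Nat.factorial_pos _)
  apply Nat.eq_of_mul_eq_mul_left hfac
  have hterm : ∀ j ∈ univ.filter (fun j => v j ≠ 0),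
      (∏ i, (v i)!) * Nat.multinomial univ (Function.update v j (v j - 1))
        = v j * n ! := by
    intro j hj
    have hvj : v j ≠ 0 := (Finset.mem_filter.mp hj).2
    have hprod : (∏ i, (v i)!) = v j * ∏ i, ((Function.update v j (v j - 1)) i)! := by
      have h1 : (fun i => ((Function.update v j (v j - 1)) i)!)
          = Function.update (fun i => (v i)!) j ((v j - 1)!) := by
        funext i
        by_cases hij : i = j
        · subst hij; simp
        · simp [Function.update_of_ne hij]
      rw [h1, Finset.prod_update_of_mem (Finset.mem_univ j),
        ← Finset.mul_prod_erase univ (fun i => (v i)!) (Finset.mem_univ j), ← mul_assoc]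
      congr 1
      · obtain ⟨k, hk⟩ := Nat.exists_eq_succ_of_ne_zero hvj
        rw [hk]
        simp [Nat.factorial_succ]
      · rw [Finset.erase_eq]
    have hsum : (∑ i, (Function.update v j (v j - 1)) i) = n := by
      rw [Finset.sum_update_of_mem (Finset.mem_univ j)]
      rw [← Finset.add_sum_erase univ v (Finset.mem_univ j), Finset.erase_eq] at hv
      omega
    rw [hprod, mul_assoc, Nat.multinomial_spec, hsum]
  rw [Nat.multinomial_spec, hv, Finset.mul_sum, Finset.sum_congr rfl hterm, ← Finset.sum_mul,
    Finset.sum_filter_ne_zero, hv, Nat.factorial_succ]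

/-! ### The right-hand side polynomial -/

noncomputable def Rp (c m : ℕ) : Polynomial ℤ :=
  ∑ v ∈ Finset.Nat.antidiagonalTuple c m,
    (Nat.multinomial univ v : Polynomial ℤ) * ∏ i, eulerianPoly (v i)

lemma Rp_zero (c : ℕ) : Rp c 0 = 1 := by
  rw [Rp, Finset.Nat.antidiagonalTuple_zero_right, Finset.sum_singleton]
  simp [Nat.multinomial, eulerianPoly_zero]

lemma prod_eulerian_update (w : Fin c → ℕ) (j : Fin c) (b : ℕ) :
    (∏ i, eulerianPoly ((Function.update w j b) i))
      = eulerianPoly b * ∏ i ∈ univ.erase j, eulerianPoly (w i) := by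
  have h1 : (fun i => eulerianPoly ((Function.update w j b) i))
      = Function.update (fun i => eulerianPoly (w i)) j (eulerianPoly b) := by
    funext i
    by_cases hij : i = j
    · subst hij; simp
    · simp [Function.update_of_ne hij]
  rw [h1, Finset.prod_update_of_mem (Finset.mem_univ j), Finset.erase_eq]

set_option maxHeartbeats 1000000 in
lemma Rp_succ (c : ℕ) :
    Rp c (n + 1) = (c : Polynomial ℤ) * Rp c n
      + (1 - X) * (X * derivative (Rp c n)) + (n : Polynomial ℤ) * (X * Rp c n) := by
  -- Step 1: split the multinomial coefficient and reindex
  have step1 : Rp c (n + 1)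
      = ∑ j : Fin c, ∑ w ∈ Finset.Nat.antidiagonalTuple c n,
          (Nat.multinomial univ w : Polynomial ℤ) *
            ∏ i, eulerianPoly ((Function.update w j (w j + 1)) i) := by
    rw [Rp]
    have h1 : ∀ v ∈ Finset.Nat.antidiagonalTuple c (n + 1),
        (Nat.multinomial univ v : Polynomial ℤ) * ∏ i, eulerianPoly (v i)
          = ∑ j ∈ univ.filter (fun j => v j ≠ 0),
              (Nat.multinomial univ (Function.update v j (v j - 1)) : Polynomial ℤ) *
                ∏ i, eulerianPoly (v i) := by
      intro v hv
      rw [multinomial_split v (Finset.Nat.mem_antidiagonalTuple.mp hv)]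
      push_cast
      rw [Finset.sum_mul]
    rw [Finset.sum_congr rfl h1]
    simp_rw [Finset.sum_filter]
    rw [Finset.sum_comm]
    refine Finset.sum_congr rfl fun j _ => ?_
    rw [← Finset.sum_filter]
    refine Finset.sum_nbij'
      (i := fun v => Function.update v j (v j - 1))
      (j := fun w => Function.update w j (w j + 1)) ?_ ?_ ?_ ?_ ?_
    · intro v hv
      rw [Finset.mem_filter, Finset.Nat.mem_antidiagonalTuple] at hv
      rw [Finset.Nat.mem_antidiagonalTuple, Finset.sum_update_of_mem (Finset.mem_univ j)]
      obtain ⟨hv1, hv2⟩ := hv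
      rw [← Finset.add_sum_erase univ v (Finset.mem_univ j), Finset.erase_eq] at hv1
      omega
    · intro w hw
      rw [Finset.Nat.mem_antidiagonalTuple] at hw
      rw [Finset.mem_filter, Finset.Nat.mem_antidiagonalTuple,
        Finset.sum_update_of_mem (Finset.mem_univ j)]
      rw [← Finset.add_sum_erase univ w (Finset.mem_univ j), Finset.erase_eq] at hw
      refine ⟨by omega, by simp⟩
    · intro v hv
      rw [Finset.mem_filter] at hv
      funext i
      by_cases hij : i = j
      · subst hij
        simp only [Function.update_self]
        have := hv.2
        omega
      · simp [Function.update_of_ne hij]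
    · intro w hw
      funext i
      by_cases hij : i = j
      · subst hij
        simp only [Function.update_self]
        omega
      · simp [Function.update_of_ne hij]
    · intro v hv
      rw [Finset.mem_filter] at hv
      have hval : Function.update (Function.update v j (v j - 1)) j
          ((Function.update v j (v j - 1)) j + 1) = v := by
        funext i
        by_cases hij : i = j
        · subst hij
          simp only [Function.update_self]
          have := hv.2
          omega
        · simp [Function.update_of_ne hij]
      rw [hval]
  -- Step 2: apply the Eulerian recurrence and regroup
  rw [step1, Finset.sum_comm]
  have hderiv : derivative (Rp c n)
      = ∑ w ∈ Finset.Nat.antidiagonalTuple c n,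
          (Nat.multinomial univ w : Polynomial ℤ) *
            derivative (∏ i, eulerianPoly (w i)) := by
    rw [Rp, derivative_sum]
    refine Finset.sum_congr rfl fun w _ => ?_
    rw [derivative_mul, derivative_natCast, zero_mul, zero_add]
  rw [hderiv, Rp]
  rw [Finset.mul_sum, Finset.mul_sum, Finset.mul_sum, Finset.mul_sum, Finset.mul_sum]
  rw [← Finset.sum_add_distrib, ← Finset.sum_add_distrib]
  refine Finset.sum_congr rfl fun w hw => ?_
  have hw' : ∑ i, w i = n := Finset.Nat.mem_antidiagonalTuple.mp hw
  -- inner sum over j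
  have hinner : ∀ j : Fin c,
      (Nat.multinomial univ w : Polynomial ℤ) *
          ∏ i, eulerianPoly ((Function.update w j (w j + 1)) i)
        = (Nat.multinomial univ w : Polynomial ℤ) *
            ((eulerianPoly (w j) + (1 - X) * (X * derivative (eulerianPoly (w j)))
                + (w j : Polynomial ℤ) * (X * eulerianPoly (w j)))
              * ∏ i ∈ univ.erase j, eulerianPoly (w i)) := by
    intro j
    rw [prod_eulerian_update, eulerianPoly_succ]
  rw [Finset.sum_congr rfl fun j _ => hinner j]
  have e1 : ∀ j : Fin c, eulerianPoly (w j) * ∏ i ∈ univ.erase j, eulerianPoly (w i)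
      = ∏ i, eulerianPoly (w i) := fun j =>
    Finset.mul_prod_erase univ (fun i => eulerianPoly (w i)) (Finset.mem_univ j)
  have e2 : derivative (∏ i, eulerianPoly (w i))
      = ∑ j : Fin c, derivative (eulerianPoly (w j)) * ∏ i ∈ univ.erase j, eulerianPoly (w i) :=
    derivative_finset_prod univ _
  -- expand everything and compare
  simp_rw [add_mul, mul_add, Finset.sum_add_distrib]
  rw [e2, Finset.mul_sum, Finset.mul_sum, Finset.mul_sum]
  congr 1
  · congr 1
    · calc ∑ j : Fin c, (Nat.multinomial univ w : Polynomial ℤ) *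
            (eulerianPoly (w j) * ∏ i ∈ univ.erase j, eulerianPoly (w i))
          = ∑ _j : Fin c, (Nat.multinomial univ w : Polynomial ℤ) *
              ∏ i, eulerianPoly (w i) :=
            Finset.sum_congr rfl (fun j _ => by rw [e1 j])
        _ = _ := by
            rw [Finset.sum_const, Finset.card_univ, Fintype.card_fin, nsmul_eq_mul]
    · refine Finset.sum_congr rfl fun j _ => ?_
      ring
  · calc ∑ j : Fin c, (Nat.multinomial univ w : Polynomial ℤ) *
          ((w j : Polynomial ℤ) * (X * eulerianPoly (w j)) *
            ∏ i ∈ univ.erase j, eulerianPoly (w i))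
        = ∑ j : Fin c, (w j : Polynomial ℤ) *
            (X * ((Nat.multinomial univ w : Polynomial ℤ) * ∏ i, eulerianPoly (w i))) :=
          Finset.sum_congr rfl (fun j _ => by rw [← e1 j]; ring)
      _ = _ := by
          rw [← Finset.sum_mul, ← Nat.cast_sum, hw']

/-! ### Conclusion -/

lemma Lp_zero (c : ℕ) : Lp c 0 = 1 := by
  unfold Lp
  have h1 : ∀ π : Equiv.Perm (Fin 0), lrminCount ⇑π = 0 := by
    intro π
    unfold lrminCount lrminFilter
    simp
  have h2 : ∀ π : Equiv.Perm (Fin 0), ascCount ⇑π = 0 := by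
    intro π
    unfold ascCount ascFilter
    simp
  rw [Finset.sum_congr rfl (fun π _ => by rw [h1 π, h2 π, pow_zero, pow_zero, one_mul])]
  rw [Finset.sum_const, Finset.card_univ, Fintype.card_perm]
  simp

lemma Lp_eq_Rp (c m : ℕ) : Lp c m = Rp c m := by
  induction m with
  | zero => rw [Lp_zero, Rp_zero]
  | succ k ih => rw [Lp_succ, Rp_succ, ih]

end Stmt16Aux

/-- Σ_{π ∈ S_n} q^{lrmin(π)} x^{asc(π)} equals the sum over q-tuples of
nonnegative integers summing to n of the multinomial coefficient times the product of
the corresponding Eulerian polynomials. -/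
theorem stmt_16 (n q : ℕ) (hn : 1 ≤ n) (hq : 1 ≤ q) :
    ∑ π : Equiv.Perm (Fin n),
        (q : Polynomial ℤ) ^ lrminCount ⇑π * Polynomial.X ^ ascCount ⇑π
      = ∑ v ∈ (Fintype.piFinset fun _ : Fin q => Finset.range (n + 1)).filter
            (fun v => ∑ i, v i = n),
          (Nat.multinomial Finset.univ v : Polynomial ℤ) * ∏ i, eulerianPoly (v i) := by
  have hset : (Fintype.piFinset fun _ : Fin q => Finset.range (n + 1)).filter
      (fun v => ∑ i, v i = n) = Finset.Nat.antidiagonalTuple q n := by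
    ext v
    simp only [Finset.mem_filter, Fintype.mem_piFinset, Finset.mem_range,
      Finset.Nat.mem_antidiagonalTuple]
    constructor
    · rintro ⟨-, h⟩
      exact h
    · intro h
      refine ⟨fun i => ?_, h⟩
      have hle : v i ≤ ∑ j, v j :=
        Finset.single_le_sum (fun j _ => Nat.zero_le _) (Finset.mem_univ i)
      omega
  rw [hset]
  exact Stmt16Aux.Lp_eq_Rp q n
end

section
/- For every integer n ≥ 1, the following identity holds in ℤ[q,x]: Σ_{π ∈ S_n} q^{lrmin(π)} x^{asc(π)} = Σ_{π ∈ S_n} q^{cyc(π)} x^{exc(π)}, i.e., the pair of statistics (number of left-to-right minima, number of ascents) is jointly equidistributed with (number of cycles, number of excedances) on S_n. -/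
open Finset

/-- The number of cycles of a permutation, fixed points counting as cycles. -/
def cycCount {n : ℕ} (π : Equiv.Perm (Fin n)) : ℕ :=
  Multiset.card π.cycleType + (univ.filter fun i => π i = i).card

/-- The number of excedances of a permutation. -/
def excCount {n : ℕ} (π : Equiv.Perm (Fin n)) : ℕ :=
  (univ.filter fun i => i < π i).card


section Aux
open Equiv Equiv.Perm

def cycMinFilter {α : Type*} [Fintype α] [LinearOrder α] (π : Perm α) : Finset α :=
  univ.filter fun x => ∀ y, π.SameCycle x y → x ≤ y

lemma fixed_mem_cycMinFilter {α : Type*} [Fintype α] [LinearOrder α] {π : Perm α} {x : α}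
    (hx : π x = x) : x ∈ cycMinFilter π := by
  simp only [cycMinFilter, mem_filter, mem_univ, true_and]
  rintro y ⟨k, rfl⟩
  rw [zpow_apply_eq_self_of_apply_eq_self hx]

lemma cycCount_eq_card_cycMinFilter {n : ℕ} (π : Perm (Fin n)) :
    cycCount π = (cycMinFilter π).card := by
  have h1 : Multiset.card π.cycleType = π.cycleFactorsFinset.card := by
    rw [cycleType_def, Multiset.card_map]; rfl
  rw [cycCount, h1]
  have h2 : (cycMinFilter π).filter (fun x => π x = x) = univ.filter fun x => π x = x := by
    ext x
    simp only [mem_filter, mem_univ, true_and]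
    exact ⟨fun h => h.2, fun hx => ⟨fixed_mem_cycMinFilter hx, hx⟩⟩
  have h3 : ((cycMinFilter π).filter (fun x => ¬ π x = x)).card = π.cycleFactorsFinset.card := by
    apply Finset.card_bij (fun x _ => π.cycleOf x)
    · rintro x hx
      simp only [mem_filter] at hx
      exact cycleOf_mem_cycleFactorsFinset_iff.mpr (mem_support.mpr hx.2)
    · rintro x hx y hy h
      simp only [mem_filter, cycMinFilter, mem_univ, true_and] at hx hy
      have hyx : π.SameCycle x y := by
        have : y ∈ (π.cycleOf x).support := by
          rw [h, mem_support_cycleOf_iff]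
          exact ⟨SameCycle.refl _ _, mem_support.mpr hy.2⟩
        exact (mem_support_cycleOf_iff.mp this).1
      exact le_antisymm (hx.1 y hyx) (hy.1 x hyx.symm)
    · rintro c hc
      have hcy : c.IsCycle := (mem_cycleFactorsFinset_iff.mp hc).1
      have hne : c.support.Nonempty := hcy.nonempty_support
      set x := c.support.min' hne with hxdef
      have hxc : x ∈ c.support := Finset.min'_mem _ _
      have hcx : c = π.cycleOf x := cycle_is_cycleOf hxc hc
      have hxsupp : x ∈ π.support := mem_cycleFactorsFinset_support_le hc hxc
      refine ⟨x, ?_, hcx.symm⟩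
      simp only [mem_filter, cycMinFilter, mem_univ, true_and]
      refine ⟨fun y hy => ?_, mem_support.mp hxsupp⟩
      rcases eq_or_ne y x with rfl | hyx
      · exact le_rfl
      · apply Finset.min'_le
        rw [hcx, mem_support_cycleOf_iff]
        exact ⟨hy, hxsupp⟩
  calc π.cycleFactorsFinset.card + (univ.filter fun x => π x = x).card
      = ((cycMinFilter π).filter (fun x => ¬ π x = x)).card
        + ((cycMinFilter π).filter (fun x => π x = x)).card := by rw [h2, h3]
    _ = (cycMinFilter π).card := by
        rw [add_comm, Finset.card_filter_add_card_filter_not]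

section Splice
variable {α : Type*} [DecidableEq α] [Fintype α]

lemma splice_apply (f : Perm α) (x y z : α) (hz : z ≠ x) (hzy : z ≠ y) :
    (f * Equiv.swap x y) z = f z := by
  simp [Equiv.swap_apply_of_ne_of_ne hz hzy]

lemma sameCycle_splice (f : Perm α) (x y : α) (hx : f x = x) (hxy : y ≠ x)
    (a b : α) (ha : a ≠ x) (hb : b ≠ x) :
    (f * Equiv.swap x y).SameCycle a b ↔ f.SameCycle a b := by
  set g := f * Equiv.swap x y with hg
  have hgy : g y = x := by simp [hg, hx]
  have hgx : g x = f y := by simp [hg]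
  constructor
  · rintro h
    obtain ⟨k, -, hk⟩ := h.exists_pow_eq'
    clear h
    induction k using Nat.strong_induction_on generalizing a with
    | _ k IH =>
      match k with
      | 0 => exact hk ▸ SameCycle.refl _ _
      | 1 =>
        rcases eq_or_ne a y with rfl | hay
        · rw [pow_one, hgy] at hk; exact absurd hk.symm hb
        · rw [pow_one, splice_apply f x y a ha hay] at hk
          exact ⟨1, by simpa using hk⟩
      | (k+2) =>
        rcases eq_or_ne a y with rfl | hay
        · have h2 : (g ^ (k+2)) a = (g ^ k) (f a) := by
            rw [pow_add]
            simp only [Perm.mul_apply, pow_two, Perm.mul_apply] at *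
            rw [hgy, hgx]
          have hfa : f a ≠ x := fun h => hxy (f.injective (h.trans hx.symm))
          have : f.SameCycle (f a) b := IH k (by omega) _ hfa (h2 ▸ hk)
          exact SameCycle.trans ⟨1, by simp⟩ this
        · have h2 : (g ^ (k+2)) a = (g ^ (k+1)) (g a) := by
            rw [pow_succ, Perm.mul_apply]
          have hga : g a = f a := splice_apply f x y a ha hay
          have hfa : f a ≠ x := fun h => ha (f.injective (h.trans hx.symm))
          have : f.SameCycle (f a) b := IH (k+1) (by omega) _ hfa (by rw [← hga, ← h2, hk])
          exact SameCycle.trans ⟨1, by simp⟩ this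
  · rintro h
    obtain ⟨k, -, hk⟩ := h.exists_pow_eq'
    clear h
    induction k generalizing b with
    | zero => exact hk ▸ SameCycle.refl _ _
    | succ k IH =>
      have hint : (f ^ k) a ≠ x := by
        intro h
        apply hb
        rw [← hk, pow_succ', Perm.mul_apply, h, hx]
      have hstep : g.SameCycle ((f ^ k) a) (f ((f ^ k) a)) := by
        rcases eq_or_ne ((f ^ k) a) y with hy | hy
        · refine ⟨2, ?_⟩
          show g (g ((f^k) a)) = _
          rw [hy, hgy, hgx, ← hy]
        · exact ⟨1, splice_apply f x y _ hint hy⟩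
      have h1 : g.SameCycle a ((f ^ k) a) := IH _ hint rfl
      have := h1.trans hstep
      rwa [← Perm.mul_apply, ← pow_succ', hk] at this

end Splice

variable {n : ℕ}

def wordIns (j : Fin (n+1)) (g : Perm (Fin n)) : Perm (Fin (n+1)) :=
  (finSuccEquiv' j).trans ((Equiv.optionCongr g).trans (finSuccEquiv' (Fin.last n)).symm)

@[simp] lemma wordIns_self (j : Fin (n+1)) (g : Perm (Fin n)) : wordIns j g j = Fin.last n := by
  simp [wordIns, finSuccEquiv'_at, finSuccEquiv'_symm_none]

@[simp] lemma wordIns_succAbove (j : Fin (n+1)) (g : Perm (Fin n)) (k : Fin n) :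
    wordIns j g (j.succAbove k) = (g k).castSucc := by
  simp only [wordIns, Equiv.trans_apply, finSuccEquiv'_succAbove, Equiv.optionCongr_apply,
    Option.map_some, finSuccEquiv'_symm_some, Fin.succAbove_last]

lemma wordIns_eq_last_iff {j i : Fin (n+1)} {g : Perm (Fin n)} :
    wordIns j g i = Fin.last n ↔ i = j := by
  constructor
  · intro h
    by_contra hij
    obtain ⟨k, rfl⟩ := Fin.exists_succAbove_eq hij
    rw [wordIns_succAbove] at h
    exact absurd h (Fin.castSucc_lt_last _).ne
  · rintro rfl; simp

lemma wordIns_lt_last {j i : Fin (n+1)} {g : Perm (Fin n)} (h : i ≠ j) :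
    wordIns j g i < Fin.last n := by
  obtain ⟨k, rfl⟩ := Fin.exists_succAbove_eq h
  rw [wordIns_succAbove]; exact Fin.castSucc_lt_last _

lemma succAbove_val (j : Fin (n+1)) (k : Fin n) :
    ((j.succAbove k : Fin (n+1)) : ℕ) = if (k : ℕ) < (j : ℕ) then (k : ℕ) else (k : ℕ) + 1 := by
  rcases lt_or_ge ((k : ℕ)) ((j : ℕ)) with h | h
  · rw [Fin.succAbove_of_castSucc_lt _ _ (by simpa [Fin.lt_iff_val_lt_val] using h)]
    simp [h]
  · rw [Fin.succAbove_of_le_castSucc _ _ (by simpa [Fin.le_iff_val_le_val] using h)]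
    simp [Nat.not_lt.mpr h]

/-- position `j` (the inserted max) is a left-to-right min iff `j = 0`. -/
lemma wordIns_lrmin_self (j : Fin (n+1)) (g : Perm (Fin n)) :
    (∀ i, i < j → wordIns j g j < wordIns j g i) ↔ j = 0 := by
  constructor
  · intro h
    by_contra h0
    have hlt : (0 : Fin (n+1)) < j := Fin.pos_iff_ne_zero.mpr h0
    have := h 0 hlt
    rw [wordIns_self] at this
    exact absurd this (not_lt.mpr (Fin.le_last _))
  · rintro rfl i hi
    exact absurd hi (Fin.not_lt_zero i)

lemma wordIns_lrmin_succAbove (j : Fin (n+1)) (g : Perm (Fin n)) (k : Fin n) :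
    (∀ i, i < j.succAbove k → wordIns j g (j.succAbove k) < wordIns j g i) ↔
      (∀ k', k' < k → g k < g k') := by
  constructor
  · intro h k' hk'
    have := h (j.succAbove k') (by rwa [Fin.succAbove_lt_succAbove_iff])
    rwa [wordIns_succAbove, wordIns_succAbove, Fin.castSucc_lt_castSucc_iff] at this
  · intro h i hi
    rcases eq_or_ne i j with rfl | hij
    · rw [wordIns_self]
      exact wordIns_lt_last (Fin.succAbove_ne _ k)
    · obtain ⟨k', rfl⟩ := Fin.exists_succAbove_eq hij
      rw [Fin.succAbove_lt_succAbove_iff] at hi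
      rw [wordIns_succAbove, wordIns_succAbove, Fin.castSucc_lt_castSucc_iff]
      exact h k' hi

lemma lrminCount_wordIns (j : Fin (n+1)) (g : Perm (Fin n)) :
    lrminCount ⇑(wordIns j g) = lrminCount ⇑g + if j = 0 then 1 else 0 := by
  unfold lrminCount lrminFilter
  have hmap : (filter (fun i => ∀ i' < i, wordIns j g i < wordIns j g i')
      (map j.succAboveEmb univ)).card = (filter (fun i => ∀ i' < i, g i < g i') univ).card := by
    rw [Finset.filter_map, Finset.card_map]
    congr 1
    apply Finset.filter_congr
    intro k _
    simpa using wordIns_lrmin_succAbove j g k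
  rw [Fin.univ_succAbove n j, Finset.filter_cons]
  by_cases hj0 : j = 0
  · rw [if_pos ((wordIns_lrmin_self j g).mpr hj0), Finset.card_cons, hmap, if_pos hj0]
  · rw [if_neg (fun h => hj0 ((wordIns_lrmin_self j g).mp h)), hmap, if_neg hj0, add_zero]

lemma wordIns_asc_self (j : Fin (n+1)) (g : Perm (Fin n)) :
    (∃ i' : Fin (n+1), (i' : ℕ) + 1 = (j : ℕ) ∧ wordIns j g i' < wordIns j g j) ↔ j ≠ 0 := by
  constructor
  · rintro ⟨i', hi', -⟩ rfl
    simp at hi'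
  · intro hj
    have hj1 : 1 ≤ (j : ℕ) := by
      rcases Nat.eq_zero_or_pos (j : ℕ) with h | h
      · exact absurd (Fin.ext h) hj
      · exact h
    have hlt : (j : ℕ) - 1 < n + 1 := by omega
    refine ⟨⟨(j : ℕ) - 1, hlt⟩, by simp; omega, ?_⟩
    rw [wordIns_self]
    exact wordIns_lt_last (Fin.ne_of_val_ne (by simp; omega))

lemma wordIns_asc_succAbove (j : Fin (n+1)) (g : Perm (Fin n)) (k : Fin n) :
    (∃ i' : Fin (n+1), (i' : ℕ) + 1 = ((j.succAbove k : Fin (n+1)) : ℕ) ∧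
        wordIns j g i' < wordIns j g (j.succAbove k)) ↔
      (k.castSucc ≠ j ∧ ∃ k' : Fin n, (k' : ℕ) + 1 = (k : ℕ) ∧ g k' < g k) := by
  constructor
  · rintro ⟨i', hv, hlt⟩
    have hij : i' ≠ j := by
      rintro rfl
      rw [wordIns_self] at hlt
      exact absurd hlt (not_lt.mpr (Fin.le_last _))
    obtain ⟨k', rfl⟩ := Fin.exists_succAbove_eq hij
    rw [wordIns_succAbove, wordIns_succAbove, Fin.castSucc_lt_castSucc_iff] at hlt
    rw [succAbove_val, succAbove_val] at hv
    have hkj : (k : ℕ) ≠ (j : ℕ) ∧ (k' : ℕ) + 1 = (k : ℕ) := by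
      split_ifs at hv <;> omega
    exact ⟨by simpa [Fin.ext_iff] using hkj.1, k', hkj.2, hlt⟩
  · rintro ⟨hkj, k', hk', hlt⟩
    have hkj' : (k : ℕ) ≠ (j : ℕ) := by simpa [Fin.ext_iff] using hkj
    refine ⟨j.succAbove k', ?_, ?_⟩
    · rw [succAbove_val, succAbove_val]
      split_ifs <;> omega
    · rw [wordIns_succAbove, wordIns_succAbove, Fin.castSucc_lt_castSucc_iff]
      exact hlt

lemma ascCount_wordIns (j : Fin (n+1)) (g : Perm (Fin n)) :
    ascCount ⇑(wordIns j g) = ascCount ⇑g +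
      if j = 0 then 0 else if j ∈ (ascFilter ⇑g).map Fin.castSuccEmb then 0 else 1 := by
  unfold ascCount ascFilter
  have hmap : (filter (fun i : Fin (n+1) => ∃ i' : Fin (n+1), (i' : ℕ) + 1 = (i : ℕ) ∧
        wordIns j g i' < wordIns j g i) (map j.succAboveEmb univ)).card
      = ((univ.filter fun k : Fin n => ∃ k' : Fin n, (k' : ℕ) + 1 = (k : ℕ) ∧ g k' < g k).filter
          (fun k => k.castSucc ≠ j)).card := by
    rw [Finset.filter_map, Finset.card_map, Finset.filter_filter]
    congr 1
    apply Finset.filter_congr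
    intro k _
    simp only [Fin.coe_succAboveEmb, Function.comp]
    rw [wordIns_asc_succAbove j g k]
    exact ⟨fun ⟨h1, h2⟩ => ⟨h2, h1⟩, fun ⟨h1, h2⟩ => ⟨h2, h1⟩⟩
  rw [Fin.univ_succAbove n j, Finset.filter_cons]
  by_cases hj0 : j = 0
  · rw [if_neg (by rw [wordIns_asc_self]; exact fun h => h hj0), hmap, if_pos hj0, add_zero]
    congr 1
    apply Finset.filter_true_of_mem
    intro k hk
    simp only [mem_filter, mem_univ, true_and] at hk
    obtain ⟨k', hk', -⟩ := hk
    intro hc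
    rw [hj0] at hc
    have : (k : ℕ) = 0 := by simpa [Fin.ext_iff] using hc
    omega
  · rw [if_pos ((wordIns_asc_self j g).mpr hj0), Finset.card_cons, hmap, if_neg hj0]
    by_cases hmem : j ∈ (ascFilter ⇑g).map Fin.castSuccEmb
    · unfold ascFilter at hmem
      rw [if_pos hmem, add_zero]
      obtain ⟨k₀, hk₀, hjk₀⟩ := Finset.mem_map.mp hmem
      have hemb : (Fin.castSuccEmb : Fin n ↪ Fin (n+1)) k₀ = k₀.castSucc := rfl
      rw [hemb] at hjk₀
      have hfil : ((univ.filter fun k : Fin n => ∃ k' : Fin n, (k' : ℕ) + 1 = (k : ℕ) ∧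
          g k' < g k).filter (fun k => k.castSucc ≠ j))
          = (univ.filter fun k : Fin n => ∃ k' : Fin n, (k' : ℕ) + 1 = (k : ℕ) ∧
              g k' < g k).erase k₀ := by
        rw [← Finset.filter_ne']
        apply Finset.filter_congr
        intro k _
        constructor
        · intro h hc; exact h (hc ▸ hjk₀)
        · intro h hc; exact h (Fin.castSucc_injective n (hjk₀ ▸ hc))
      rw [hfil, Finset.card_erase_of_mem hk₀]
      have : 1 ≤ (univ.filter fun k : Fin n => ∃ k' : Fin n, (k' : ℕ) + 1 = (k : ℕ) ∧
          g k' < g k).card := Finset.card_pos.mpr ⟨k₀, hk₀⟩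
      omega
    · unfold ascFilter at hmem
      rw [if_neg hmem]
      congr 2
      apply Finset.filter_true_of_mem
      intro k hk hc
      exact hmem (Finset.mem_map.mpr ⟨k, hk, hc ▸ rfl⟩)

lemma wordIns_bijective :
    Function.Bijective (fun jg : Fin (n+1) × Perm (Fin n) => wordIns jg.1 jg.2) := by
  rw [Fintype.bijective_iff_injective_and_card]
  constructor
  · rintro ⟨j, g⟩ ⟨j', g'⟩ h
    simp only at h
    have hj : j' = j := by
      rw [← wordIns_eq_last_iff (g := g) (j := j), h, wordIns_self]
    subst hj
    have hg : g = g' := by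
      apply Equiv.ext
      intro k
      have h2 : wordIns j' g (j'.succAbove k) = wordIns j' g' (j'.succAbove k) := by rw [h]
      simp only [wordIns_succAbove] at h2
      exact Fin.castSucc_injective n h2
    rw [hg]
  · simp [Fintype.card_perm, Nat.factorial_succ]

def extPerm (τ : Perm (Fin n)) : Perm (Fin (n+1)) :=
  (finSuccEquivLast.symm).permCongr (Equiv.optionCongr τ)

@[simp] lemma extPerm_castSucc (τ : Perm (Fin n)) (k : Fin n) :
    extPerm τ k.castSucc = (τ k).castSucc := by
  simp [extPerm, Equiv.permCongr_apply]

@[simp] lemma extPerm_last (τ : Perm (Fin n)) : extPerm τ (Fin.last n) = Fin.last n := by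
  simp [extPerm, Equiv.permCongr_apply]

lemma extPerm_pow_castSucc (τ : Perm (Fin n)) (m : ℕ) (k : Fin n) :
    (extPerm τ ^ m) k.castSucc = ((τ ^ m) k).castSucc := by
  induction m with
  | zero => simp
  | succ m ih => rw [pow_succ', Perm.mul_apply, ih, extPerm_castSucc, ← Perm.mul_apply, ← pow_succ']

lemma extPerm_pow_last (τ : Perm (Fin n)) (m : ℕ) :
    (extPerm τ ^ m) (Fin.last n) = Fin.last n := by
  induction m with
  | zero => simp
  | succ m ih => rw [pow_succ', Perm.mul_apply, ih, extPerm_last]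

lemma sameCycle_extPerm_iff {τ : Perm (Fin n)} {a b : Fin n} :
    (extPerm τ).SameCycle a.castSucc b.castSucc ↔ τ.SameCycle a b := by
  constructor
  · intro h
    obtain ⟨i, -, hi⟩ := h.exists_pow_eq'
    rw [extPerm_pow_castSucc] at hi
    exact ⟨i, by rw [zpow_natCast]; exact Fin.castSucc_injective n hi⟩
  · intro h
    obtain ⟨i, -, hi⟩ := h.exists_pow_eq'
    exact ⟨i, by rw [zpow_natCast, extPerm_pow_castSucc, hi]⟩

lemma not_sameCycle_extPerm_last (τ : Perm (Fin n)) (a : Fin n) :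
    ¬ (extPerm τ).SameCycle a.castSucc (Fin.last n) := by
  intro h
  obtain ⟨i, -, hi⟩ := h.exists_pow_eq'
  rw [extPerm_pow_castSucc] at hi
  exact absurd hi (Fin.castSucc_lt_last _).ne

def cycIns (p : Fin (n+1)) (τ : Perm (Fin n)) : Perm (Fin (n+1)) :=
  extPerm τ * Equiv.swap (Fin.last n) p

lemma cycIns_last (τ : Perm (Fin n)) : cycIns (Fin.last n) τ = extPerm τ := by
  rw [cycIns, Equiv.swap_self]
  rfl

lemma cycIns_apply_self (p : Fin (n+1)) (τ : Perm (Fin n)) : cycIns p τ p = Fin.last n := by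
  rw [cycIns, Perm.mul_apply, Equiv.swap_apply_right, extPerm_last]

lemma cycIns_eq_last_iff {p i : Fin (n+1)} {τ : Perm (Fin n)} :
    cycIns p τ i = Fin.last n ↔ i = p := by
  rw [cycIns, Perm.mul_apply]
  constructor
  · intro h
    have h2 : Equiv.swap (Fin.last n) p i = Fin.last n := by
      have := extPerm_last τ
      exact (extPerm τ).injective (by rw [h, this])
    rwa [Equiv.swap_apply_eq_iff, Equiv.swap_apply_left] at h2
  · rintro rfl
    rw [Equiv.swap_apply_right, extPerm_last]

lemma cycIns_castSucc {p' k : Fin n} {τ : Perm (Fin n)} (hk : k ≠ p') :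
    cycIns p'.castSucc τ k.castSucc = (τ k).castSucc := by
  have h1 : k.castSucc ≠ Fin.last n := (Fin.castSucc_lt_last k).ne
  have h2 : k.castSucc ≠ p'.castSucc := fun h => hk (Fin.castSucc_injective n h)
  rw [cycIns, Perm.mul_apply, Equiv.swap_apply_of_ne_of_ne h1 h2, extPerm_castSucc]

lemma cycIns_bijective :
    Function.Bijective (fun pt : Fin (n+1) × Perm (Fin n) => cycIns pt.1 pt.2) := by
  rw [Fintype.bijective_iff_injective_and_card]
  constructor
  · rintro ⟨p, τ⟩ ⟨p', τ'⟩ h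
    simp only at h
    have hp : p = p' := by
      rw [← cycIns_eq_last_iff (p := p') (τ := τ'), ← h, cycIns_apply_self]
    subst hp
    have : extPerm τ = extPerm τ' := by
      have := mul_right_cancel h
      exact this
    have hτ : τ = τ' := by
      apply Equiv.ext
      intro k
      have h2 : extPerm τ k.castSucc = extPerm τ' k.castSucc := by rw [this]
      rw [extPerm_castSucc, extPerm_castSucc] at h2
      exact Fin.castSucc_injective n h2
    rw [hτ]
  · simp [Fintype.card_perm, Nat.factorial_succ]

lemma cycIns_apply_castSucc (p : Fin (n+1)) (τ : Perm (Fin n)) (k : Fin n)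
    (h : k.castSucc ≠ p) : cycIns p τ k.castSucc = (τ k).castSucc := by
  rw [cycIns, Perm.mul_apply, Equiv.swap_apply_of_ne_of_ne (Fin.castSucc_lt_last k).ne h,
    extPerm_castSucc]

lemma excCount_cycIns (p : Fin (n+1)) (τ : Perm (Fin n)) :
    excCount (cycIns p τ) = excCount τ +
      if p = Fin.last n then 0
      else if p ∈ (univ.filter fun i : Fin n => i < τ i).map Fin.castSuccEmb then 0 else 1 := by
  unfold excCount
  rw [Fin.univ_succAbove n (Fin.last n), Finset.filter_cons,
    if_neg (fun h => absurd h (not_lt.mpr (Fin.le_last _))), Finset.filter_map, Finset.card_map]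
  by_cases hp : p = Fin.last n
  · rw [if_pos hp, add_zero]
    congr 1
    apply Finset.filter_congr
    intro k _
    simp only [Function.comp, Fin.coe_succAboveEmb, Fin.succAbove_last]
    rw [cycIns_apply_castSucc p τ k (by rw [hp]; exact (Fin.castSucc_lt_last k).ne),
      Fin.castSucc_lt_castSucc_iff]
  · rw [if_neg hp]
    obtain ⟨p', hp'⟩ := Fin.exists_succAbove_eq hp
    rw [Fin.succAbove_last] at hp'
    have hins : (univ.filter ((fun i : Fin (n+1) => i < cycIns p τ i) ∘ ⇑(Fin.last n).succAboveEmb))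
        = insert p' (univ.filter fun k : Fin n => k < τ k) := by
      ext k
      simp only [mem_filter, mem_univ, true_and, mem_insert, Function.comp,
        Fin.coe_succAboveEmb, Fin.succAbove_last]
      rcases eq_or_ne k p' with rfl | hk
      · simp only [true_or, iff_true]
        rw [hp', cycIns_apply_self]
        rw [← hp']
        exact Fin.castSucc_lt_last k
      · have hne : k.castSucc ≠ p := by
          rw [← hp']
          exact fun h => hk (Fin.castSucc_injective n h)
        rw [cycIns_apply_castSucc p τ k hne, Fin.castSucc_lt_castSucc_iff]
        simp [hk]
    rw [hins]
    by_cases hp'm : p' ∈ (univ.filter fun k : Fin n => k < τ k)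
    · rw [Finset.insert_eq_self.mpr hp'm,
        if_pos (Finset.mem_map.mpr ⟨p', hp'm, hp'⟩), add_zero]
    · rw [Finset.card_insert_of_notMem hp'm,
        if_neg (fun hm => by
          obtain ⟨q, hq, hqe⟩ := Finset.mem_map.mp hm
          have : q = p' := Fin.castSucc_injective n (hqe.trans hp'.symm)
          exact hp'm (this ▸ hq))]

lemma cycMin_pred_last_iff (p : Fin (n+1)) (τ : Perm (Fin n)) :
    (∀ y, (cycIns p τ).SameCycle (Fin.last n) y → Fin.last n ≤ y) ↔ p = Fin.last n := by
  constructor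
  · intro h
    by_contra hp
    obtain ⟨p', hp'⟩ := Fin.exists_succAbove_eq hp
    rw [Fin.succAbove_last] at hp'
    have hsc : (cycIns p τ).SameCycle (Fin.last n) p'.castSucc := by
      refine (SameCycle.symm ?_)
      exact ⟨1, by rw [zpow_one, hp', cycIns_apply_self]⟩
    have := h _ hsc
    rw [← hp'] at hp
    exact absurd this (not_le.mpr (Fin.castSucc_lt_last p'))
  · rintro rfl y hy
    rw [cycIns_last] at hy
    obtain ⟨i, -, hi⟩ := hy.exists_pow_eq'
    rw [extPerm_pow_last] at hi
    exact hi ▸ le_refl _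
lemma cycMin_pred_castSucc_iff (p : Fin (n+1)) (τ : Perm (Fin n)) (k : Fin n) :
    (∀ y, (cycIns p τ).SameCycle k.castSucc y → k.castSucc ≤ y) ↔
      (∀ b, τ.SameCycle k b → k ≤ b) := by
  by_cases hp : p = Fin.last n
  · subst hp
    rw [cycIns_last]
    constructor
    · intro h b hb
      have := h b.castSucc (sameCycle_extPerm_iff.mpr hb)
      rwa [Fin.castSucc_le_castSucc_iff] at this
    · intro h y hy
      induction y using Fin.lastCases with
      | last => exact absurd hy (not_sameCycle_extPerm_last τ k)
      | cast b => exact Fin.castSucc_le_castSucc_iff.mpr (h b (sameCycle_extPerm_iff.mp hy))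
  · have hsplice : ∀ a b : Fin n, ((cycIns p τ).SameCycle a.castSucc b.castSucc ↔
        (extPerm τ).SameCycle a.castSucc b.castSucc) := by
      intro a b
      exact sameCycle_splice (extPerm τ) (Fin.last n) p (extPerm_last τ) hp
        a.castSucc b.castSucc (Fin.castSucc_lt_last a).ne (Fin.castSucc_lt_last b).ne
    constructor
    · intro h b hb
      have := h b.castSucc ((hsplice k b).mpr (sameCycle_extPerm_iff.mpr hb))
      rwa [Fin.castSucc_le_castSucc_iff] at this
    · intro h y hy
      induction y using Fin.lastCases with
      | last => exact Fin.le_last _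
      | cast b =>
        exact Fin.castSucc_le_castSucc_iff.mpr
          (h b (sameCycle_extPerm_iff.mp ((hsplice k b).mp hy)))

def cycMinCount {m : ℕ} (π : Perm (Fin m)) : ℕ :=
  (univ.filter fun x => ∀ y, π.SameCycle x y → x ≤ y).card

lemma cycMinCount_cycIns (p : Fin (n+1)) (τ : Perm (Fin n)) :
    cycMinCount (cycIns p τ) = cycMinCount τ + if p = Fin.last n then 1 else 0 := by
  unfold cycMinCount
  have hmap : (filter ((fun x : Fin (n+1) => ∀ y, (cycIns p τ).SameCycle x y → x ≤ y)
        ∘ ⇑(Fin.last n).succAboveEmb) univ).card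
      = (filter (fun x : Fin n => ∀ y, τ.SameCycle x y → x ≤ y) univ).card := by
    congr 1
    apply Finset.filter_congr
    intro k _
    simp only [Function.comp, Fin.coe_succAboveEmb, Fin.succAbove_last]
    exact cycMin_pred_castSucc_iff p τ k
  rw [Fin.univ_succAbove n (Fin.last n), Finset.filter_cons]
  by_cases hp : p = Fin.last n
  · rw [if_pos ((cycMin_pred_last_iff p τ).mpr hp), Finset.card_cons, Finset.filter_map,
      Finset.card_map, hmap, if_pos hp]
  · rw [if_neg (fun h => hp ((cycMin_pred_last_iff p τ).mp h)), Finset.filter_map,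
      Finset.card_map, hmap, if_neg hp, add_zero]

lemma key_count {n : ℕ}
    (u v : Perm (Fin (n+1)) → ℕ) (u' v' : Perm (Fin n) → ℕ)
    (W : Fin (n+1) × Perm (Fin n) → Perm (Fin (n+1))) (hW : Function.Bijective W)
    (j₀ : Perm (Fin n) → Fin (n+1)) (A : Perm (Fin n) → Finset (Fin (n+1)))
    (hA : ∀ g, (A g).card = v' g) (hj₀ : ∀ g, j₀ g ∉ A g)
    (hu : ∀ j g, u (W (j, g)) = u' g + if j = j₀ g then 1 else 0)
    (hv : ∀ j g, v (W (j, g)) = v' g + if j = j₀ g then 0 else if j ∈ A g then 0 else 1)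
    (l a : ℕ) :
    (univ.filter fun σ => u σ = l ∧ v σ = a).card =
      (univ.filter fun g : Perm (Fin n) => u' g + 1 = l ∧ v' g = a).card
      + a * (univ.filter fun g : Perm (Fin n) => u' g = l ∧ v' g = a).card
      + (n + 1 - a) * (univ.filter fun g : Perm (Fin n) => u' g = l ∧ v' g + 1 = a).card := by
  have h1 : (univ.filter fun σ => u σ = l ∧ v σ = a).card
      = (univ.filter fun jg : Fin (n+1) × Perm (Fin n) => u (W jg) = l ∧ v (W jg) = a).card := by
    symm
    apply Finset.card_bij (fun jg _ => W jg)
    · intro jg hjg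
      simp only [mem_filter, mem_univ, true_and] at hjg ⊢
      exact hjg
    · intro x hx y hy h
      exact hW.1 h
    · intro σ hσ
      obtain ⟨jg, rfl⟩ := hW.2 σ
      simp only [mem_filter, mem_univ, true_and] at hσ ⊢
      exact ⟨jg, hσ, rfl⟩
  have hinner : ∀ g : Perm (Fin n),
      (∑ j : Fin (n+1), if u (W (j, g)) = l ∧ v (W (j, g)) = a then 1 else 0)
      = (if u' g + 1 = l ∧ v' g = a then 1 else 0)
        + (a * if u' g = l ∧ v' g = a then 1 else 0)
        + ((n + 1 - a) * if u' g = l ∧ v' g + 1 = a then 1 else 0) := by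
    intro g
    have hsub : A g ⊆ univ.erase (j₀ g) := by
      intro x hx
      exact Finset.mem_erase.mpr ⟨fun h => hj₀ g (h ▸ hx), mem_univ x⟩
    rw [← Finset.add_sum_erase _ _ (mem_univ (j₀ g)), ← Finset.sum_sdiff hsub]
    have e1 : (if u (W (j₀ g, g)) = l ∧ v (W (j₀ g, g)) = a then 1 else 0)
        = if u' g + 1 = l ∧ v' g = a then 1 else 0 := by
      rw [hu, hv, if_pos rfl, if_pos rfl, add_zero]
    have e2 : ∀ j ∈ A g, (if u (W (j, g)) = l ∧ v (W (j, g)) = a then 1 else 0)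
        = if u' g = l ∧ v' g = a then 1 else 0 := by
      intro j hj
      have hjne : j ≠ j₀ g := fun h => hj₀ g (h ▸ hj)
      rw [hu, hv, if_neg hjne, if_neg hjne, if_pos hj, add_zero, add_zero]
    have e3 : ∀ j ∈ (univ.erase (j₀ g)) \ A g,
        (if u (W (j, g)) = l ∧ v (W (j, g)) = a then 1 else 0)
        = if u' g = l ∧ v' g + 1 = a then 1 else 0 := by
      intro j hj
      obtain ⟨hj1, hj2⟩ := Finset.mem_sdiff.mp hj
      have hjne : j ≠ j₀ g := (Finset.mem_erase.mp hj1).1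
      rw [hu, hv, if_neg hjne, if_neg hjne, if_neg hj2, add_zero]
    rw [Finset.sum_congr rfl e3, Finset.sum_congr rfl e2, e1, Finset.sum_const,
      Finset.sum_const, hA, Finset.card_sdiff_of_subset hsub, Finset.card_erase_of_mem (mem_univ _),
      Finset.card_univ, Fintype.card_fin, hA]
    by_cases hc2 : u' g = l ∧ v' g = a
    · have hc3 : ¬ (u' g = l ∧ v' g + 1 = a) := fun h => by omega
      rw [if_pos hc2, if_neg hc3]
      have hva : v' g = a := hc2.2
      have hle : v' g ≤ n := by
        have := hA g
        have := Finset.card_le_card hsub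
        rw [hA, Finset.card_erase_of_mem (mem_univ _), Finset.card_univ, Fintype.card_fin] at this
        omega
      simp [smul_eq_mul]
      omega
    · rw [if_neg hc2]
      by_cases hc3 : u' g = l ∧ v' g + 1 = a
      · rw [if_pos hc3]
        have : n + 1 - a = n + 1 - 1 - v' g := by omega
        simp [smul_eq_mul]
        omega
      · rw [if_neg hc3]
        simp
  rw [h1, Finset.card_filter, Fintype.sum_prod_type, Finset.sum_comm]
  rw [Finset.sum_congr rfl (fun g _ => hinner g), Finset.sum_add_distrib,
    Finset.sum_add_distrib, ← Finset.mul_sum, ← Finset.mul_sum,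
    ← Finset.card_filter, ← Finset.card_filter, ← Finset.card_filter]

lemma zero_not_mem_ascMap (g : Perm (Fin n)) :
    (0 : Fin (n+1)) ∉ (ascFilter ⇑g).map Fin.castSuccEmb := by
  intro hm
  obtain ⟨k, hk, hk0⟩ := Finset.mem_map.mp hm
  obtain ⟨k', hk', -⟩ := (Finset.mem_filter.mp hk).2
  have h0 : ((Fin.castSuccEmb k : Fin (n+1)) : ℕ) = 0 := by rw [hk0]; rfl
  have : ((Fin.castSuccEmb k : Fin (n+1)) : ℕ) = (k : ℕ) := rfl
  omega

lemma last_not_mem_excMap (τ : Perm (Fin n)) :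
    Fin.last n ∉ (univ.filter fun i : Fin n => i < τ i).map Fin.castSuccEmb := by
  intro hm
  obtain ⟨k, -, hke⟩ := Finset.mem_map.mp hm
  exact absurd hke (Fin.castSucc_lt_last k).ne

lemma equidist (n l a : ℕ) :
    (univ.filter fun π : Perm (Fin n) => lrminCount ⇑π = l ∧ ascCount ⇑π = a).card =
      (univ.filter fun π : Perm (Fin n) => cycMinCount π = l ∧ excCount π = a).card := by
  induction n generalizing l a with
  | zero =>
    congr 1
  | succ n IH =>
    calc (univ.filter fun π : Perm (Fin (n+1)) => lrminCount ⇑π = l ∧ ascCount ⇑π = a).card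
        = (univ.filter fun g : Perm (Fin n) => lrminCount ⇑g + 1 = l ∧ ascCount ⇑g = a).card
          + a * (univ.filter fun g : Perm (Fin n) =>
              lrminCount ⇑g = l ∧ ascCount ⇑g = a).card
          + (n + 1 - a) * (univ.filter fun g : Perm (Fin n) =>
              lrminCount ⇑g = l ∧ ascCount ⇑g + 1 = a).card :=
        key_count (fun σ => lrminCount ⇑σ) (fun σ => ascCount ⇑σ)
          (fun g => lrminCount ⇑g) (fun g => ascCount ⇑g)
          (fun jg => wordIns jg.1 jg.2) wordIns_bijective (fun _ => 0)
          (fun g => (ascFilter ⇑g).map Fin.castSuccEmb)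
          (fun g => by rw [Finset.card_map]; rfl)
          (fun g => zero_not_mem_ascMap g)
          (fun j g => lrminCount_wordIns j g)
          (fun j g => ascCount_wordIns j g) l a
      _ = (univ.filter fun g : Perm (Fin n) => cycMinCount g + 1 = l ∧ excCount g = a).card
          + a * (univ.filter fun g : Perm (Fin n) =>
              cycMinCount g = l ∧ excCount g = a).card
          + (n + 1 - a) * (univ.filter fun g : Perm (Fin n) =>
              cycMinCount g = l ∧ excCount g + 1 = a).card := by
        have e1 : ∀ l' a' : ℕ, (univ.filter fun g : Perm (Fin n) =>
            lrminCount ⇑g = l' ∧ ascCount ⇑g = a').card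
            = (univ.filter fun g : Perm (Fin n) => cycMinCount g = l' ∧ excCount g = a').card :=
          fun l' a' => IH l' a'
        have e2 : (univ.filter fun g : Perm (Fin n) =>
            lrminCount ⇑g + 1 = l ∧ ascCount ⇑g = a).card
            = (univ.filter fun g : Perm (Fin n) => cycMinCount g + 1 = l ∧ excCount g = a).card := by
          cases l with
          | zero =>
            have h1 : (univ.filter fun g : Perm (Fin n) =>
                lrminCount ⇑g + 1 = 0 ∧ ascCount ⇑g = a) = ∅ :=
              Finset.filter_false_of_mem (fun g _ => by omega)
            have h2 : (univ.filter fun g : Perm (Fin n) =>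
                cycMinCount g + 1 = 0 ∧ excCount g = a) = ∅ :=
              Finset.filter_false_of_mem (fun g _ => by omega)
            rw [h1, h2]
          | succ l =>
            have h1 : (univ.filter fun g : Perm (Fin n) =>
                lrminCount ⇑g + 1 = l + 1 ∧ ascCount ⇑g = a)
                = univ.filter fun g : Perm (Fin n) => lrminCount ⇑g = l ∧ ascCount ⇑g = a :=
              Finset.filter_congr (fun g _ => by omega)
            have h2 : (univ.filter fun g : Perm (Fin n) =>
                cycMinCount g + 1 = l + 1 ∧ excCount g = a)
                = univ.filter fun g : Perm (Fin n) => cycMinCount g = l ∧ excCount g = a :=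
              Finset.filter_congr (fun g _ => by omega)
            rw [h1, h2, IH]
        have e3 : (univ.filter fun g : Perm (Fin n) =>
            lrminCount ⇑g = l ∧ ascCount ⇑g + 1 = a).card
            = (univ.filter fun g : Perm (Fin n) => cycMinCount g = l ∧ excCount g + 1 = a).card := by
          cases a with
          | zero =>
            have h1 : (univ.filter fun g : Perm (Fin n) =>
                lrminCount ⇑g = l ∧ ascCount ⇑g + 1 = 0) = ∅ :=
              Finset.filter_false_of_mem (fun g _ => by omega)
            have h2 : (univ.filter fun g : Perm (Fin n) =>
                cycMinCount g = l ∧ excCount g + 1 = 0) = ∅ :=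
              Finset.filter_false_of_mem (fun g _ => by omega)
            rw [h1, h2]
          | succ a =>
            have h1 : (univ.filter fun g : Perm (Fin n) =>
                lrminCount ⇑g = l ∧ ascCount ⇑g + 1 = a + 1)
                = univ.filter fun g : Perm (Fin n) => lrminCount ⇑g = l ∧ ascCount ⇑g = a :=
              Finset.filter_congr (fun g _ => by omega)
            have h2 : (univ.filter fun g : Perm (Fin n) =>
                cycMinCount g = l ∧ excCount g + 1 = a + 1)
                = univ.filter fun g : Perm (Fin n) => cycMinCount g = l ∧ excCount g = a :=
              Finset.filter_congr (fun g _ => by omega)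
            rw [h1, h2, IH]
        rw [e1, e2, e3]
      _ = (univ.filter fun π : Perm (Fin (n+1)) => cycMinCount π = l ∧ excCount π = a).card :=
        (key_count cycMinCount excCount cycMinCount excCount
          (fun pt => cycIns pt.1 pt.2) cycIns_bijective (fun _ => Fin.last n)
          (fun τ => (univ.filter fun i => i < τ i).map Fin.castSuccEmb)
          (fun τ => by rw [Finset.card_map]; rfl)
          (fun τ => last_not_mem_excMap τ)
          (fun p τ => cycMinCount_cycIns p τ)
          (fun p τ => excCount_cycIns p τ) l a).symm

lemma cycCount_eq_cycMinCount {m : ℕ} (π : Perm (Fin m)) : cycCount π = cycMinCount π := by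
  rw [cycCount_eq_card_cycMinFilter]
  unfold cycMinFilter cycMinCount
  rw [Finset.filter_congr_decidable]

end Aux
/-- (lrmin, asc) is jointly equidistributed with (cyc, exc) on S_n,
as an identity in ℤ[q,x] (variables X 0 = q, X 1 = x). -/
theorem stmt_17 (n : ℕ) (hn : 1 ≤ n) :
    ∑ π : Equiv.Perm (Fin n),
        (MvPolynomial.X 0 : MvPolynomial (Fin 2) ℤ) ^ lrminCount ⇑π *
          MvPolynomial.X 1 ^ ascCount ⇑π
      = ∑ π : Equiv.Perm (Fin n),
          (MvPolynomial.X 0 : MvPolynomial (Fin 2) ℤ) ^ cycCount π *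
            MvPolynomial.X 1 ^ excCount π := by
    classical
  have hbound : ∀ s : Finset (Fin n), s.card < n + 1 := fun s =>
    Nat.lt_succ_of_le (le_trans (Finset.card_le_univ s) (by simp))
  have hb1 : ∀ π : Equiv.Perm (Fin n), π ∈ (univ : Finset (Equiv.Perm (Fin n))) →
      (lrminCount ⇑π, ascCount ⇑π) ∈ Finset.range (n+1) ×ˢ Finset.range (n+1) := by
    intro π _
    rw [Finset.mem_product, Finset.mem_range, Finset.mem_range]
    exact ⟨hbound (lrminFilter ⇑π), hbound (ascFilter ⇑π)⟩
  have hb2 : ∀ π : Equiv.Perm (Fin n), π ∈ (univ : Finset (Equiv.Perm (Fin n))) →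
      (cycCount π, excCount π) ∈ Finset.range (n+1) ×ˢ Finset.range (n+1) := by
    intro π _
    rw [Finset.mem_product, Finset.mem_range, Finset.mem_range, cycCount_eq_cycMinCount]
    exact ⟨hbound (univ.filter fun x => ∀ y, π.SameCycle x y → x ≤ y), hbound (univ.filter fun i => i < π i)⟩
  rw [← Finset.sum_fiberwise_of_maps_to hb1
      (fun π => (MvPolynomial.X 0 : MvPolynomial (Fin 2) ℤ) ^ lrminCount ⇑π *
        MvPolynomial.X 1 ^ ascCount ⇑π),
    ← Finset.sum_fiberwise_of_maps_to hb2
      (fun π => (MvPolynomial.X 0 : MvPolynomial (Fin 2) ℤ) ^ cycCount π *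
        MvPolynomial.X 1 ^ excCount π)]
  apply Finset.sum_congr rfl
  rintro ⟨l, a⟩ -
  have hL : ∀ π ∈ univ.filter (fun π : Equiv.Perm (Fin n) =>
      (lrminCount ⇑π, ascCount ⇑π) = (l, a)),
      (MvPolynomial.X 0 : MvPolynomial (Fin 2) ℤ) ^ lrminCount ⇑π *
        MvPolynomial.X 1 ^ ascCount ⇑π
      = (MvPolynomial.X 0 : MvPolynomial (Fin 2) ℤ) ^ l * MvPolynomial.X 1 ^ a := by
    intro π hπ
    have h := (Finset.mem_filter.mp hπ).2
    have h1 : lrminCount ⇑π = l := congrArg Prod.fst h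
    have h2 : ascCount ⇑π = a := congrArg Prod.snd h
    rw [h1, h2]
  have hR : ∀ π ∈ univ.filter (fun π : Equiv.Perm (Fin n) =>
      (cycCount π, excCount π) = (l, a)),
      (MvPolynomial.X 0 : MvPolynomial (Fin 2) ℤ) ^ cycCount π *
        MvPolynomial.X 1 ^ excCount π
      = (MvPolynomial.X 0 : MvPolynomial (Fin 2) ℤ) ^ l * MvPolynomial.X 1 ^ a := by
    intro π hπ
    have h := (Finset.mem_filter.mp hπ).2
    have h1 : cycCount π = l := congrArg Prod.fst h
    have h2 : excCount π = a := congrArg Prod.snd h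
    rw [h1, h2]
  rw [Finset.sum_congr rfl hL, Finset.sum_congr rfl hR, Finset.sum_const, Finset.sum_const]
  congr 1
  have hfl : (univ.filter fun π : Equiv.Perm (Fin n) =>
      (lrminCount ⇑π, ascCount ⇑π) = (l, a))
      = univ.filter fun π : Equiv.Perm (Fin n) => lrminCount ⇑π = l ∧ ascCount ⇑π = a := by
    apply Finset.filter_congr
    intro π _
    rw [Prod.mk.injEq]
  have hfr : (univ.filter fun π : Equiv.Perm (Fin n) =>
      (cycCount π, excCount π) = (l, a))
      = univ.filter fun π : Equiv.Perm (Fin n) => cycMinCount π = l ∧ excCount π = a := by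
    apply Finset.filter_congr
    intro π _
    rw [Prod.mk.injEq, cycCount_eq_cycMinCount]
  rw [hfl, hfr, equidist]
end
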